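/- arXiv:2408.00148 — 10 statements merged into one kernel-verified Lean document; each statement's English description precedes it below -/
import Mathlib

section
/- For all positive reals a and b, (a - b)(log a - log b) ≥ 4(√a - √b)². -/
lemma aux_log_ineq (s : ℝ) (hs : 1 ≤ s) : 2 * (s - 1) ≤ (s + 1) * Real.log s := by
  set f : ℝ → ℝ := fun t => (t + 1) * Real.log t - 2 * (t - 1) with hf
  have hderiv : ∀ x : ℝ, 0 < x → HasDerivAt f (Real.log x + (x + 1) * x⁻¹ - 2) x := by
    intro x hx
    have h1 : HasDerivAt (fun t : ℝ => (t + 1) * Real.log t)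
        (1 * Real.log x + (x + 1) * x⁻¹) x :=
      (((hasDerivAt_id x).add_const 1)).mul (Real.hasDerivAt_log hx.ne')
    have h2 : HasDerivAt (fun t : ℝ => 2 * (t - 1)) 2 x := by
      simpa using ((hasDerivAt_id x).sub_const 1).const_mul 2
    have h3 := h1.sub h2
    rw [one_mul] at h3
    exact h3
  have hmono : MonotoneOn f (Set.Ici (1 : ℝ)) := by
    apply monotoneOn_of_deriv_nonneg (convex_Ici 1)
    · apply ContinuousOn.sub
      · exact (continuousOn_id.add continuousOn_const).mul
          (Real.continuousOn_log.mono (by intro x hx; simp at hx ⊢; linarith))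
      · exact (continuousOn_const.mul (continuousOn_id.sub continuousOn_const))
    · intro x hx
      rw [interior_Ici] at hx
      exact ((hderiv x (by linarith [Set.mem_Ioi.mp hx])).differentiableAt).differentiableWithinAt
    · intro x hx
      rw [interior_Ici] at hx
      have hx1 : (1:ℝ) < x := hx
      have hx0 : (0:ℝ) < x := by linarith
      rw [(hderiv x hx0).deriv]
      have hlog : Real.log x⁻¹ ≤ x⁻¹ - 1 := Real.log_le_sub_one_of_pos (by positivity)
      rw [Real.log_inv] at hlog
      have hxi : (x + 1) * x⁻¹ = 1 + x⁻¹ := by field_simp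
      rw [hxi]; linarith
  have h0 : f 1 = 0 := by simp [hf]
  have := hmono (Set.self_mem_Ici) (Set.mem_Ici.mpr hs) hs
  rw [h0] at this
  simpa [hf, sub_nonneg] using this

lemma key_ineq (a b : ℝ) (ha : 0 < a) (hb : 0 < b) (hab : b ≤ a) :
    (a - b) * (Real.log a - Real.log b) ≥ 4 * (Real.sqrt a - Real.sqrt b) ^ 2 := by
  set x := Real.sqrt a with hx
  set y := Real.sqrt b with hy
  have hx0 : 0 < x := Real.sqrt_pos.mpr ha
  have hy0 : 0 < y := Real.sqrt_pos.mpr hb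
  have hxy : y ≤ x := Real.sqrt_le_sqrt hab
  have hxa : x ^ 2 = a := Real.sq_sqrt ha.le
  have hyb : y ^ 2 = b := Real.sq_sqrt hb.le
  have hs : 1 ≤ x / y := (one_le_div hy0).mpr hxy
  have hlem := aux_log_ineq (x / y) hs
  have hlogdiv : Real.log (x / y) = Real.log x - Real.log y :=
    Real.log_div hx0.ne' hy0.ne'
  have hloga : Real.log a = 2 * Real.log x := by
    rw [← hxa, Real.log_pow]; push_cast; ring
  have hlogb : Real.log b = 2 * Real.log y := by
    rw [← hyb, Real.log_pow]; push_cast; ring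
  -- multiply lemma by y : (x + y) * log(x/y) ≥ 2 * (x - y)
  have h1 : 2 * (x - y) ≤ (x + y) * (Real.log x - Real.log y) := by
    have := mul_le_mul_of_nonneg_left hlem hy0.le
    rw [hlogdiv] at this
    have e1 : y * (2 * (x / y - 1)) = 2 * (x - y) := by field_simp
    have e2 : y * ((x / y + 1) * (Real.log x - Real.log y))
        = (x + y) * (Real.log x - Real.log y) := by field_simp
    rw [e1, e2] at this; exact this
  have hlogxy : 0 ≤ Real.log x - Real.log y := by
    have := Real.log_le_log hy0 hxy
    linarith
  have h2 := mul_le_mul_of_nonneg_left h1 (by linarith : (0:ℝ) ≤ 2 * (x - y))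
  calc 4 * (x - y) ^ 2 = 2 * (x - y) * (2 * (x - y)) := by ring
    _ ≤ 2 * (x - y) * ((x + y) * (Real.log x - Real.log y)) := h2
    _ = (x ^ 2 - y ^ 2) * (2 * Real.log x - 2 * Real.log y) := by ring
    _ = (a - b) * (Real.log a - Real.log b) := by rw [hxa, hyb, hloga, hlogb]

theorem stmt0 (a b : ℝ) (ha : 0 < a) (hb : 0 < b) :
    (a - b) * (Real.log a - Real.log b) ≥ 4 * (Real.sqrt a - Real.sqrt b) ^ 2 := by
  rcases le_total b a with h | h
  · exact key_ineq a b ha hb h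
  · have := key_ineq b a hb ha h
    calc 4 * (Real.sqrt a - Real.sqrt b) ^ 2
        = 4 * (Real.sqrt b - Real.sqrt a) ^ 2 := by ring
      _ ≤ (b - a) * (Real.log b - Real.log a) := this
      _ = (a - b) * (Real.log a - Real.log b) := by ring
end

section
/- Let q = (q_0, ..., q_{2k}) be a probability vector on {0,1,...,2k} with mean μ = Σ n·q_n. Then (1/2)·Σ_{i,j} |i-j| q_i q_j ≥ Σ_{i=0}^{⌊μ⌋} (μ - i) q_i. -/
theorem stmt1 (k : ℕ) (hk : 0 < k) (q : ℕ → ℝ)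
    (hq : ∀ n, 0 ≤ q n) (hsum : ∑ n ∈ Finset.range (2*k+1), q n = 1)
    (μ : ℝ) (hμ : μ = ∑ n ∈ Finset.range (2*k+1), (n : ℝ) * q n) :
    (1/2) * ∑ i ∈ Finset.range (2*k+1), ∑ j ∈ Finset.range (2*k+1),
        |(i : ℝ) - (j : ℝ)| * q i * q j
      ≥ ∑ i ∈ Finset.range (Nat.floor μ + 1), (μ - (i : ℝ)) * q i := by
  set S := Finset.range (2*k+1) with hS
  -- μ ≥ 0
  have hμ0 : 0 ≤ μ := by
    rw [hμ]
    apply Finset.sum_nonneg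
    intro i _
    exact mul_nonneg (by positivity) (hq i)
  -- μ ≤ 2k
  have hμ2k : μ ≤ (2*k : ℕ) := by
    rw [hμ]
    calc ∑ n ∈ S, (n : ℝ) * q n ≤ ∑ n ∈ S, ((2*k : ℕ) : ℝ) * q n := by
          apply Finset.sum_le_sum
          intro n hn
          have hn' : n ≤ 2*k := Nat.lt_succ_iff.mp (Finset.mem_range.mp hn)
          exact mul_le_mul_of_nonneg_right (by exact_mod_cast hn') (hq n)
      _ = ((2*k : ℕ) : ℝ) * 1 := by rw [← Finset.mul_sum, hsum]
      _ = ((2*k : ℕ) : ℝ) := mul_one _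
  have hfloor : Nat.floor μ ≤ 2*k := by
    have := Nat.floor_le_floor hμ2k
    rwa [Nat.floor_natCast] at this
  set m := Nat.floor μ with hm
  have hAS : Finset.range (m+1) ⊆ S := Finset.range_subset_range.mpr (by omega)
  -- key pointwise bound
  have hkey : ∀ i ∈ S, |μ - (i:ℝ)| ≤ ∑ j ∈ S, |(i:ℝ) - (j:ℝ)| * q j := by
    intro i _
    have heq : μ - (i:ℝ) = ∑ j ∈ S, ((j:ℝ) - (i:ℝ)) * q j := by
      simp only [sub_mul]
      rw [Finset.sum_sub_distrib, ← Finset.mul_sum, hsum, hμ, mul_one]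
    rw [heq]
    calc |∑ j ∈ S, ((j:ℝ) - (i:ℝ)) * q j| ≤ ∑ j ∈ S, |((j:ℝ) - (i:ℝ)) * q j| :=
          Finset.abs_sum_le_sum_abs _ _
      _ = ∑ j ∈ S, |(i:ℝ) - (j:ℝ)| * q j := by
          apply Finset.sum_congr rfl
          intro j _
          rw [abs_mul, abs_of_nonneg (hq j), abs_sub_comm]
  -- double sum ≥ Σ q_i |μ - i|
  have hD : ∑ i ∈ S, ∑ j ∈ S, |(i:ℝ) - (j:ℝ)| * q i * q j ≥ ∑ i ∈ S, q i * |μ - (i:ℝ)| := by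
    have hrw : ∀ i ∈ S, ∑ j ∈ S, |(i:ℝ) - (j:ℝ)| * q i * q j
        = q i * ∑ j ∈ S, |(i:ℝ) - (j:ℝ)| * q j := by
      intro i _
      rw [Finset.mul_sum]
      exact Finset.sum_congr rfl (fun j _ => by ring)
    rw [Finset.sum_congr rfl hrw]
    apply Finset.sum_le_sum
    intro i hi
    exact mul_le_mul_of_nonneg_left (hkey i hi) (hq i)
  -- Σ (μ - i) q_i = 0
  have hzero : ∑ i ∈ S, (μ - (i:ℝ)) * q i = 0 := by
    simp only [sub_mul]
    rw [Finset.sum_sub_distrib, ← Finset.mul_sum, hsum, hμ, mul_one, sub_self]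
  -- split the sum
  have hsplit : ∑ i ∈ S \ Finset.range (m+1), (μ - (i:ℝ)) * q i
      + ∑ i ∈ Finset.range (m+1), (μ - (i:ℝ)) * q i = 0 := by
    rw [Finset.sum_sdiff hAS]; exact hzero
  have habs : ∑ i ∈ S, q i * |μ - (i:ℝ)|
      = 2 * ∑ i ∈ Finset.range (m+1), (μ - (i:ℝ)) * q i := by
    rw [← Finset.sum_sdiff hAS]
    have h1 : ∑ i ∈ Finset.range (m+1), q i * |μ - (i:ℝ)|
        = ∑ i ∈ Finset.range (m+1), (μ - (i:ℝ)) * q i := by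
      apply Finset.sum_congr rfl
      intro i hi
      have hi' : (i:ℝ) ≤ μ := by
        have : i ≤ m := Nat.lt_succ_iff.mp (Finset.mem_range.mp hi)
        calc (i:ℝ) ≤ (m:ℝ) := by exact_mod_cast this
          _ ≤ μ := Nat.floor_le hμ0
      rw [abs_of_nonneg (by linarith), mul_comm]
    have h2 : ∑ i ∈ S \ Finset.range (m+1), q i * |μ - (i:ℝ)|
        = - ∑ i ∈ S \ Finset.range (m+1), (μ - (i:ℝ)) * q i := by
      rw [← Finset.sum_neg_distrib]
      apply Finset.sum_congr rfl
      intro i hi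
      have hi' : μ < (i:ℝ) := by
        have hnot := (Finset.mem_sdiff.mp hi).2
        have : m + 1 ≤ i := by
          by_contra h
          exact hnot (Finset.mem_range.mpr (by omega))
        have hμlt : μ < (m:ℝ) + 1 := Nat.lt_floor_add_one μ
        calc μ < (m:ℝ) + 1 := hμlt
          _ ≤ (i:ℝ) := by exact_mod_cast this
      rw [abs_of_neg (by linarith)]
      ring
    rw [h1, h2]
    linarith [hsplit]
  linarith [hD, habs]
end

section
/- Among all probability vectors q on {0,1,...,2k} with mean μ ∈ (0,2k), the rescaled Gini index G̃[q] = (1/2)Σ_{i,j}|i-j| q_i q_j is uniquely minimized by q* given by q*_{⌊μ⌋} = 1 - μ + ⌊μ⌋, q*_{⌊μ⌋+1} = μ - ⌊μ⌋ and q*_n = 0 otherwise. That is, if q has mean μ and q_m > 0 for some m ∉ {⌊μ⌋, ⌊μ⌋+1}, then G̃[q] > (1 - μ + ⌊μ⌋)(μ - ⌊μ⌋). -/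
lemma aux_ind (N i : ℕ) (h : i ≤ N) :
    ∑ t ∈ Finset.range N, (if t < i then (1:ℝ) else 0) = i := by
  rw [Finset.sum_ite, Finset.sum_const, Finset.sum_const]
  have : (Finset.range N).filter (fun t => t < i) = Finset.range i := by
    ext t; simp; omega
  simp [this]

lemma aux_abs (N i j : ℕ) (hi : i ≤ N) (hj : j ≤ N) :
    |(i:ℝ) - (j:ℝ)| = ∑ t ∈ Finset.range N,
      ((if t < i then (1:ℝ) else 0) + (if t < j then (1:ℝ) else 0)
        - 2 * (if t < i then (1:ℝ) else 0) * (if t < j then (1:ℝ) else 0)) := by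
  have main : ∀ a b : ℕ, a ≤ b → b ≤ N →
      (∑ t ∈ Finset.range N,
      ((if t < a then (1:ℝ) else 0) + (if t < b then (1:ℝ) else 0)
        - 2 * (if t < a then (1:ℝ) else 0) * (if t < b then (1:ℝ) else 0)))
      = (b:ℝ) - (a:ℝ) := by
    intro a b hab hbN
    have h1 : ∀ t, ((if t < a then (1:ℝ) else 0) + (if t < b then (1:ℝ) else 0)
        - 2 * (if t < a then (1:ℝ) else 0) * (if t < b then (1:ℝ) else 0))
        = (if t < b then (1:ℝ) else 0) - (if t < a then (1:ℝ) else 0) := by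
      intro t
      by_cases h : t < a
      · have h' : t < b := lt_of_lt_of_le h hab
        simp [h, h']; ring
      · simp [h]
    simp only [h1]
    rw [Finset.sum_sub_distrib, aux_ind N a (le_trans hab hbN), aux_ind N b hbN]
  rcases le_total i j with hij | hij
  · rw [main i j hij hj, abs_sub_comm, abs_of_nonneg (sub_nonneg.2 (Nat.cast_le.2 hij))]
  · have := main j i hij hi
    rw [abs_of_nonneg (sub_nonneg.2 (Nat.cast_le.2 hij))]
    rw [← this]
    apply Finset.sum_congr rfl
    intro t _
    ring

set_option maxHeartbeats 1000000 in
theorem stmt3 (k : ℕ) (hk : 0 < k) (q : ℕ → ℝ)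
    (hq : ∀ n, 0 ≤ q n) (hsum : ∑ n ∈ Finset.range (2*k+1), q n = 1)
    (μ : ℝ) (hμ : μ = ∑ n ∈ Finset.range (2*k+1), (n : ℝ) * q n)
    (hμ0 : 0 < μ) (hμ2k : μ < 2*k)
    (m : ℕ) (hm : m ≤ 2*k) (hqm : 0 < q m)
    (hm1 : m ≠ Nat.floor μ) (hm2 : m ≠ Nat.floor μ + 1) :
    (1/2) * ∑ i ∈ Finset.range (2*k+1), ∑ j ∈ Finset.range (2*k+1),
        |(i : ℝ) - (j : ℝ)| * q i * q j
      > (1 - μ + (Nat.floor μ : ℝ)) * (μ - (Nat.floor μ : ℝ)) := by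
  set N := 2*k with hNdef
  set c : ℕ → ℝ := fun t => ∑ i ∈ Finset.range (N+1), (if t < i then (1:ℝ) else 0) * q i
    with hcdef
  -- basic facts about c
  have h0c : ∀ t, 0 ≤ c t := by
    intro t
    apply Finset.sum_nonneg
    intro i _
    split_ifs <;> simp [hq i]
  have hc1 : ∀ t, c t ≤ 1 := by
    intro t
    rw [← hsum]
    apply Finset.sum_le_sum
    intro i _
    split_ifs <;> simp [hq i]
  have hmono : ∀ t s : ℕ, t ≤ s → c s ≤ c t := by
    intro t s hts
    apply Finset.sum_le_sum
    intro i _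
    split_ifs with h h' <;>
      first
        | exact le_rfl
        | (exfalso; omega)
        | (simp [hq i])

  have hqc : ∀ t, t < m → q m ≤ c t := by
    intro t ht
    have hmem : m ∈ Finset.range (N+1) := Finset.mem_range.2 (by omega)
    have h := Finset.single_le_sum (f := fun i => (if t < i then (1:ℝ) else 0) * q i)
      (fun i _ => by split_ifs <;> simp [hq i]) hmem
    simp only [if_pos ht, one_mul] at h
    exact h
  have hcm : c m ≤ 1 - q m := by
    have hmem : m ∈ Finset.range (N+1) := Finset.mem_range.2 (by omega)
    have h1 : c m = ∑ i ∈ (Finset.range (N+1)).erase m, (if m < i then (1:ℝ) else 0) * q i :=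
      (Finset.sum_erase _ (by simp)).symm
    have h2 : ∑ i ∈ (Finset.range (N+1)).erase m, q i = 1 - q m := by
      rw [Finset.sum_erase_eq_sub hmem, hsum]
    rw [h1, ← h2]
    apply Finset.sum_le_sum
    intro i _
    split_ifs <;> simp [hq i]
  have hsumc : ∑ t ∈ Finset.range N, c t = μ := by
    rw [hμ]
    simp only [hcdef]
    rw [Finset.sum_comm]
    apply Finset.sum_congr rfl
    intro i hi
    rw [← Finset.sum_mul, aux_ind N i (Nat.lt_succ_iff.mp (Finset.mem_range.mp hi))]
  have key : ∑ i ∈ Finset.range (N+1), ∑ j ∈ Finset.range (N+1), |(i:ℝ) - (j:ℝ)| * q i * q j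
      = 2 * ∑ t ∈ Finset.range N, c t * (1 - c t) := by
    have step1 : ∑ i ∈ Finset.range (N+1), ∑ j ∈ Finset.range (N+1), |(i:ℝ) - (j:ℝ)| * q i * q j
        = ∑ i ∈ Finset.range (N+1), ∑ j ∈ Finset.range (N+1), ∑ t ∈ Finset.range N,
          ((if t < i then (1:ℝ) else 0) + (if t < j then (1:ℝ) else 0)
            - 2 * (if t < i then (1:ℝ) else 0) * (if t < j then (1:ℝ) else 0)) * (q i * q j) := by
      refine Finset.sum_congr rfl fun i hi => Finset.sum_congr rfl fun j hj => ?_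
      rw [← Finset.sum_mul, ← aux_abs N i j (Nat.lt_succ_iff.mp (Finset.mem_range.mp hi))
        (Nat.lt_succ_iff.mp (Finset.mem_range.mp hj))]
      ring
    rw [step1]
    have e1 : ∀ i : ℕ, ∑ j ∈ Finset.range (N+1), ∑ t ∈ Finset.range N,
        ((if t < i then (1:ℝ) else 0) + (if t < j then (1:ℝ) else 0)
          - 2 * (if t < i then (1:ℝ) else 0) * (if t < j then (1:ℝ) else 0)) * (q i * q j)
        = ∑ t ∈ Finset.range N, ∑ j ∈ Finset.range (N+1),
        ((if t < i then (1:ℝ) else 0) + (if t < j then (1:ℝ) else 0)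
          - 2 * (if t < i then (1:ℝ) else 0) * (if t < j then (1:ℝ) else 0)) * (q i * q j) := by
      intro i; exact Finset.sum_comm
    simp only [e1]
    rw [Finset.sum_comm]
    rw [Finset.mul_sum]
    apply Finset.sum_congr rfl
    intro t _
    have expand : ∀ i j : ℕ, ((if t < i then (1:ℝ) else 0) + (if t < j then (1:ℝ) else 0)
        - 2 * (if t < i then (1:ℝ) else 0) * (if t < j then (1:ℝ) else 0)) * (q i * q j)
        = ((if t < i then (1:ℝ) else 0) * q i) * q j
          + q i * ((if t < j then (1:ℝ) else 0) * q j)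
          - (2 * ((if t < i then (1:ℝ) else 0) * q i)) * ((if t < j then (1:ℝ) else 0) * q j) := by
      intro i j; ring
    have t1 := Finset.sum_mul_sum (Finset.range (N+1)) (Finset.range (N+1))
      (fun i => (if t < i then (1:ℝ) else 0) * q i) q
    have t2 := Finset.sum_mul_sum (Finset.range (N+1)) (Finset.range (N+1))
      q (fun j => (if t < j then (1:ℝ) else 0) * q j)
    have t3 := Finset.sum_mul_sum (Finset.range (N+1)) (Finset.range (N+1))
      (fun i => 2 * ((if t < i then (1:ℝ) else 0) * q i)) (fun j => (if t < j then (1:ℝ) else 0) * q j)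
    simp only [expand, Finset.sum_add_distrib, Finset.sum_sub_distrib]
    rw [← t1, ← t2, ← t3, hsum, ← Finset.mul_sum]
    have hct : ∑ i ∈ Finset.range (N+1), (if t < i then (1:ℝ) else 0) * q i = c t := rfl
    rw [hct]
    ring
  -- floor setup
  set F := Nat.floor μ with hFdef
  have hfl : (F:ℝ) ≤ μ := Nat.floor_le hμ0.le
  have hfu : μ < (F:ℝ) + 1 := Nat.lt_floor_add_one μ
  have hFN : F < N := by
    have hN' : μ < (N:ℝ) := by rw [hNdef]; push_cast; exact hμ2k
    exact (Nat.floor_lt hμ0.le).2 hN'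
  have hsplit : ∀ g : ℕ → ℝ, ∑ t ∈ Finset.range N, g t
      = (∑ t ∈ Finset.range F, g t) + g F + ∑ t ∈ Finset.Ico (F+1) N, g t := by
    intro g
    rw [Finset.range_eq_Ico, ← Finset.sum_Ico_consecutive g (Nat.zero_le F) hFN.le,
      Finset.sum_eq_sum_Ico_succ_bot hFN g, ← Finset.range_eq_Ico]
    ring
  have hABx : (∑ t ∈ Finset.range F, c t) + c F + (∑ t ∈ Finset.Ico (F+1) N, c t) = μ := by
    rw [← hsumc, hsplit c]
  have hAF : (∑ t ∈ Finset.range F, c t) ≤ (F:ℝ) := by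
    calc (∑ t ∈ Finset.range F, c t) ≤ ∑ t ∈ Finset.range F, (1:ℝ) :=
          Finset.sum_le_sum (fun t _ => hc1 t)
      _ = F := by simp
  have hB0 : (0:ℝ) ≤ ∑ t ∈ Finset.Ico (F+1) N, c t := Finset.sum_nonneg fun t _ => h0c t
  have hx0 : 0 ≤ c F := h0c F
  have hx1 : c F ≤ 1 := hc1 F
  have hlow : ∑ t ∈ Finset.range N, c t * (1 - c t)
      ≥ c F * ((F:ℝ) - ∑ t ∈ Finset.range F, c t) + c F * (1 - c F)
        + (1 - c F) * ∑ t ∈ Finset.Ico (F+1) N, c t := by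
    rw [hsplit (fun t => c t * (1 - c t))]
    have l1 : c F * ((F:ℝ) - ∑ t ∈ Finset.range F, c t)
        ≤ ∑ t ∈ Finset.range F, c t * (1 - c t) := by
      have hterm : ∀ t ∈ Finset.range F, c F * (1 - c t) ≤ c t * (1 - c t) := by
        intro t ht
        exact mul_le_mul_of_nonneg_right (hmono t F (Finset.mem_range.mp ht).le)
          (by linarith [hc1 t])
      calc c F * ((F:ℝ) - ∑ t ∈ Finset.range F, c t)
          = ∑ t ∈ Finset.range F, c F * (1 - c t) := by
            rw [← Finset.mul_sum, Finset.sum_sub_distrib, Finset.sum_const, Finset.card_range]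
            simp
        _ ≤ _ := Finset.sum_le_sum hterm
    have l2 : (1 - c F) * (∑ t ∈ Finset.Ico (F+1) N, c t)
        ≤ ∑ t ∈ Finset.Ico (F+1) N, c t * (1 - c t) := by
      have hterm : ∀ t ∈ Finset.Ico (F+1) N, (1 - c F) * c t ≤ c t * (1 - c t) := by
        intro t ht
        have htt := Finset.mem_Ico.mp ht
        have h1 : c t ≤ c F := hmono F t (by omega)
        nlinarith [h0c t]
      calc (1 - c F) * (∑ t ∈ Finset.Ico (F+1) N, c t)
          = ∑ t ∈ Finset.Ico (F+1) N, (1 - c F) * c t := Finset.mul_sum _ _ _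
        _ ≤ _ := Finset.sum_le_sum hterm
    linarith [l1, l2]
  have hf0' : (0:ℝ) ≤ μ - F := by linarith
  have hf1' : μ - (F:ℝ) < 1 := by linarith
  -- strictness
  have hstrict : c F * ((F:ℝ) - ∑ t ∈ Finset.range F, c t) + c F * (1 - c F)
        + (1 - c F) * (∑ t ∈ Finset.Ico (F+1) N, c t)
      > (1 - (μ - (F:ℝ))) * (μ - (F:ℝ)) := by
    rcases Nat.lt_or_ge m F with hmF | hmF
    · -- m < F
      have hAq : (∑ t ∈ Finset.range F, c t) ≤ (F:ℝ) - q m := by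
        have hmem : m ∈ Finset.range F := Finset.mem_range.2 hmF
        have hb : (∑ t ∈ Finset.range F, c t)
            ≤ ∑ t ∈ Finset.range F, (if t = m then 1 - q m else 1) := by
          apply Finset.sum_le_sum
          intro t _
          split_ifs with h
          · rw [h]; exact hcm
          · exact hc1 t
        have h2 : ∑ t ∈ Finset.range F, (if t = m then (1:ℝ) - q m else 1)
            = (F:ℝ) - q m := by
          have hpt : ∀ t : ℕ, (if t = m then (1:ℝ) - q m else 1)
              = 1 - (if t = m then q m else 0) := by
            intro t; split_ifs <;> ring
          simp only [hpt]
          rw [Finset.sum_sub_distrib, Finset.sum_ite_eq' (Finset.range F) m (fun _ => q m),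
            if_pos hmem, Finset.sum_const, Finset.card_range]
          simp
        linarith
      rcases le_or_gt (c F) (μ - (F:ℝ)) with hxf | hxf
      · nlinarith [mul_le_mul_of_nonneg_left (by linarith : 1 - (μ - (F:ℝ)) ≤ 1 - c F) hf0']
      · nlinarith [mul_pos (by linarith : (0:ℝ) < c F - (μ - F))
          (by linarith : (0:ℝ) < 1 - (μ - (F:ℝ))), hB0]
    · have hmF2 : F + 2 ≤ m := by omega
      have hBq : q m ≤ ∑ t ∈ Finset.Ico (F+1) N, c t := by
        have hmem : m - 1 ∈ Finset.Ico (F+1) N := Finset.mem_Ico.2 ⟨by omega, by omega⟩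
        have h1 : q m ≤ c (m-1) := hqc (m-1) (by omega)
        have h2 : c (m-1) ≤ ∑ t ∈ Finset.Ico (F+1) N, c t :=
          Finset.single_le_sum (fun t _ => h0c t) hmem
        linarith
      rcases lt_or_ge (c F) (μ - (F:ℝ)) with hxf | hxf
      · nlinarith [mul_pos (lt_of_le_of_lt hx0 hxf)
          (by linarith : (0:ℝ) < (μ - (F:ℝ)) - c F), hAF]
      · nlinarith [mul_le_mul_of_nonneg_right hxf
          (by linarith : (0:ℝ) ≤ 1 - (μ - (F:ℝ))), hB0]
  have hhalf : (1/2) * (∑ i ∈ Finset.range (N+1), ∑ j ∈ Finset.range (N+1),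
      |(i:ℝ) - (j:ℝ)| * q i * q j) = ∑ t ∈ Finset.range N, c t * (1 - c t) := by
    rw [key]; ring
  have hgoal : (1 - μ + (F:ℝ)) * (μ - (F:ℝ)) = (1 - (μ - (F:ℝ))) * (μ - (F:ℝ)) := by ring
  rw [hgoal]
  calc (1 - (μ - (F:ℝ))) * (μ - (F:ℝ))
      < c F * ((F:ℝ) - ∑ t ∈ Finset.range F, c t) + c F * (1 - c F)
        + (1 - c F) * (∑ t ∈ Finset.Ico (F+1) N, c t) := hstrict
    _ ≤ ∑ t ∈ Finset.range N, c t * (1 - c t) := hlow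
    _ = (1/2) * (∑ i ∈ Finset.range (N+1), ∑ j ∈ Finset.range (N+1),
        |(i:ℝ) - (j:ℝ)| * q i * q j) := hhalf.symm
end

section
/- Let q(t) be a C¹ solution of the ODE system q_n' = q_{n-1} Σ_{j=n}^{2k} q_j + q_{n+1} Σ_{j=0}^{n} q_j - q_n(1 - q_n) for 0 ≤ n ≤ 2k (with the convention q_{-1} = q_{2k+1} = 0), taking values in the probability simplex. Then d/dt [(1/2) Σ_{i,j=0}^{2k} |i-j| q_i q_j] = -2 Σ_{0 ≤ i < j < ℓ ≤ 2k} q_i q_j q_ℓ ≤ 0. -/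
open Finset

lemma mysplit (f : ℤ → ℝ) {a b c : ℤ} (h1 : a ≤ b) (h2 : b ≤ c) :
    ∑ i ∈ Finset.Icc a c, f i
      = ∑ i ∈ Finset.Icc a b, f i + ∑ i ∈ Finset.Icc (b+1) c, f i := by
  rw [← Finset.sum_union ?_]
  · apply Finset.sum_congr ?_ (fun _ _ => rfl)
    ext x; simp only [Finset.mem_Icc, Finset.mem_union]; omega
  · rw [Finset.disjoint_left]
    intro x hx hx'
    simp only [Finset.mem_Icc] at hx hx'
    omega

lemma myshift (f : ℤ → ℝ) (a b : ℤ) :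
    ∑ n ∈ Finset.Icc (a+1) (b+1), f n = ∑ m ∈ Finset.Icc a b, f (m+1) := by
  have h : Finset.Icc (a+1) (b+1) = (Finset.Icc a b).map (addLeftEmbedding 1) := by
    rw [Finset.map_add_left_Icc]; congr 1 <;> ring
  rw [h, Finset.sum_map]
  apply Finset.sum_congr rfl
  intro m _
  congr 1
  simp [addLeftEmbedding]
  ring

lemma mytele (g : ℤ → ℝ) {N : ℤ} (hN : 0 ≤ N) :
    ∑ n ∈ Finset.Icc 0 N, (g n - g (n-1)) = g N - g (-1) := by
  refine Int.le_induction (motive := fun M _ => ∑ n ∈ Finset.Icc 0 M, (g n - g (n-1)) = g M - g (-1)) ?_ ?_ N hN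
  · simp
  · intro m hm ih
    rw [mysplit _ (by omega : (0:ℤ) ≤ m) (by omega : m ≤ m+1), ih]
    rw [Finset.Icc_self, Finset.sum_singleton]
    ring_nf

noncomputable def PP (p : ℤ → ℝ) (n : ℤ) : ℝ := ∑ m ∈ Finset.Icc 0 n, p m

noncomputable def dd (p : ℤ → ℝ) (N n : ℤ) : ℝ :=
  p (n-1) * (∑ j ∈ Finset.Icc n N, p j) + p (n+1) * (∑ j ∈ Finset.Icc 0 n, p j)
    - p n * (1 - p n)

lemma PP_neg (p : ℤ → ℝ) {n : ℤ} (h : n < 0) : PP p n = 0 := by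
  rw [PP, Finset.Icc_eq_empty (by omega), Finset.sum_empty]

lemma PP_succ (p : ℤ → ℝ) {n : ℤ} (h : 0 ≤ n) : PP p n = PP p (n-1) + p n := by
  rcases eq_or_lt_of_le h with h' | h'
  · rw [← h', PP, PP, show Finset.Icc (0:ℤ) (0-1) = ∅ from Finset.Icc_eq_empty (by omega),
      Finset.sum_empty, Finset.Icc_self, Finset.sum_singleton]
    ring
  · rw [PP, PP, mysplit p (by omega : (0:ℤ) ≤ n - 1) (by omega : n - 1 ≤ n)]
    rw [show n - 1 + 1 = n by ring, Finset.Icc_self, Finset.sum_singleton]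

section main

variable {p : ℤ → ℝ} {N : ℤ} (hN : 1 ≤ N)
  (h0 : ∀ n : ℤ, n < 0 ∨ N < n → p n = 0)
  (h1 : ∑ n ∈ Finset.Icc 0 N, p n = 1)

include hN h0 h1

lemma PP_top {n : ℤ} (hn : N ≤ n) : PP p n = 1 := by
  rw [PP, mysplit p (by omega : (0:ℤ) ≤ N) hn, h1,
    Finset.sum_eq_zero (fun i hi => h0 i (by simp only [Finset.mem_Icc] at hi; omega))]
  ring

lemma Ssum (n : ℤ) : ∑ j ∈ Finset.Icc n N, p j = 1 - PP p (n-1) := by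
  rcases le_or_gt n 0 with h | h
  · rw [PP_neg p (by omega)]
    rcases eq_or_lt_of_le h with h' | h'
    · rw [h', h1]; ring
    · rw [mysplit p (by omega : n ≤ -1) (by omega : (-1:ℤ) ≤ N),
        Finset.sum_eq_zero (fun i hi => h0 i (by simp only [Finset.mem_Icc] at hi; omega)),
        show (-1:ℤ)+1 = 0 by ring, h1]
      ring
  · rcases le_or_gt n (N+1) with h2 | h2
    · have := mysplit p (by omega : (0:ℤ) ≤ n-1) (by omega : n-1 ≤ N)
      rw [h1, show n - 1 + 1 = n by ring] at this
      rw [← PP] at this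
      linarith
    · rw [Finset.Icc_eq_empty (by omega), Finset.sum_empty,
        PP_top hN h0 h1 (by omega)]
      ring

lemma Dsum : ∀ m : ℤ, 0 ≤ m →
    ∑ i ∈ Finset.Icc 0 m, dd p N i = p (m+1) * PP p m - p m * (1 - PP p m) := by
  refine Int.le_induction
    (motive := fun m _ => ∑ i ∈ Finset.Icc 0 m, dd p N i
      = p (m+1) * PP p m - p m * (1 - PP p m)) ?_ ?_
  · show ∑ i ∈ Finset.Icc (0:ℤ) 0, dd p N i = p (0+1) * PP p 0 - p 0 * (1 - PP p 0)
    rw [Finset.Icc_self, Finset.sum_singleton, dd,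
      h0 (0-1) (by omega), Ssum hN h0 h1 0, ← PP]
    have h2 : PP p 0 = p 0 := by rw [PP, Finset.Icc_self, Finset.sum_singleton]
    rw [show (0:ℤ)-1 = -1 by ring, PP_neg p (show (-1:ℤ) < 0 by norm_num), h2]
    ring
  · intro m hm ih
    show ∑ i ∈ Finset.Icc 0 (m+1), dd p N i
      = p (m+1+1) * PP p (m+1) - p (m+1) * (1 - PP p (m+1))
    rw [mysplit _ (by omega : (0:ℤ) ≤ m) (by omega : m ≤ m+1), ih,
      Finset.Icc_self, Finset.sum_singleton, dd,
      show m+1-1 = m by ring, Ssum hN h0 h1 (m+1), ← PP,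
      show m+1-1 = m by ring, PP_succ p (by omega : (0:ℤ) ≤ m+1),
      show m+1-1 = m by ring]
    ring

lemma Esum : ∑ i ∈ Finset.Icc 0 N, dd p N i = 0 := by
  rw [Dsum hN h0 h1 N (by omega), h0 (N+1) (by omega), PP_top hN h0 h1 le_rfl]
  ring

end main

lemma habs_aux {N i j : ℤ} (hiN : i ≤ N) (h0j : 0 ≤ j) (hji : j ≤ i) :
    |(i:ℝ) - (j:ℝ)|
      = ∑ m ∈ Finset.Icc 0 (N-1),
          (if (j ≤ m ∧ m < i) ∨ (i ≤ m ∧ m < j) then (1:ℝ) else 0) := by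
  have hc : ∀ m : ℤ, ((j ≤ m ∧ m < i) ∨ (i ≤ m ∧ m < j)) ↔ m ∈ Finset.Ico j i := by
    intro m; simp only [Finset.mem_Ico]; omega
  rw [Finset.sum_congr rfl (fun m _ => if_congr (hc m) rfl rfl),
    Finset.sum_ite_mem, Finset.inter_eq_right.mpr ?_, Finset.sum_const, nsmul_eq_mul,
    mul_one, Int.card_Ico, abs_of_nonneg (by exact_mod_cast sub_nonneg.mpr hji : (0:ℝ) ≤ (i:ℝ) - j)]
  · rw [show ((i - j).toNat : ℝ) = (((i-j).toNat : ℤ) : ℝ) from by push_cast; ring,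
      Int.toNat_of_nonneg (by omega)]
    push_cast; ring
  · intro m hm
    simp only [Finset.mem_Ico] at hm
    simp only [Finset.mem_Icc]
    omega

lemma habs {N i j : ℤ} (h0i : 0 ≤ i) (hiN : i ≤ N) (h0j : 0 ≤ j) (hjN : j ≤ N) :
    |(i:ℝ) - (j:ℝ)|
      = ∑ m ∈ Finset.Icc 0 (N-1),
          (if (j ≤ m ∧ m < i) ∨ (i ≤ m ∧ m < j) then (1:ℝ) else 0) := by
  rcases le_total j i with h | h
  · exact habs_aux hiN h0j h
  · rw [abs_sub_comm, habs_aux hjN h0i h]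
    exact Finset.sum_congr rfl (fun m _ => if_congr or_comm rfl rfl)

section main2

variable {p : ℤ → ℝ} {N : ℤ} (hN : 1 ≤ N)
  (h0 : ∀ n : ℤ, n < 0 ∨ N < n → p n = 0)
  (h1 : ∑ n ∈ Finset.Icc 0 N, p n = 1)

include hN h0 h1

lemma keyC :
    ∑ i ∈ Finset.Icc 0 N, ∑ j ∈ Finset.Icc 0 N, |(i:ℝ) - (j:ℝ)| * (dd p N i * p j)
      = ∑ m ∈ Finset.Icc 0 (N-1),
          (∑ i ∈ Finset.Icc 0 m, dd p N i) * (1 - 2 * PP p m) := by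
  have step1 : ∑ i ∈ Finset.Icc 0 N, ∑ j ∈ Finset.Icc 0 N,
      |(i:ℝ) - (j:ℝ)| * (dd p N i * p j)
      = ∑ m ∈ Finset.Icc 0 (N-1), ∑ i ∈ Finset.Icc 0 N, ∑ j ∈ Finset.Icc 0 N,
          (if (j ≤ m ∧ m < i) ∨ (i ≤ m ∧ m < j) then (1:ℝ) else 0) * (dd p N i * p j) := by
    have e1 : ∀ i ∈ Finset.Icc (0:ℤ) N, ∀ j ∈ Finset.Icc (0:ℤ) N,
        |(i:ℝ) - (j:ℝ)| * (dd p N i * p j)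
        = ∑ m ∈ Finset.Icc 0 (N-1),
            (if (j ≤ m ∧ m < i) ∨ (i ≤ m ∧ m < j) then (1:ℝ) else 0) * (dd p N i * p j) := by
      intro i hi j hj
      simp only [Finset.mem_Icc] at hi hj
      rw [habs hi.1 hi.2 hj.1 hj.2, Finset.sum_mul]
    calc ∑ i ∈ Finset.Icc 0 N, ∑ j ∈ Finset.Icc 0 N, |(i:ℝ) - (j:ℝ)| * (dd p N i * p j)
        = ∑ i ∈ Finset.Icc 0 N, ∑ j ∈ Finset.Icc 0 N, ∑ m ∈ Finset.Icc 0 (N-1),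
            (if (j ≤ m ∧ m < i) ∨ (i ≤ m ∧ m < j) then (1:ℝ) else 0) * (dd p N i * p j) :=
          Finset.sum_congr rfl (fun i hi => Finset.sum_congr rfl (fun j hj => e1 i hi j hj))
      _ = ∑ i ∈ Finset.Icc 0 N, ∑ m ∈ Finset.Icc 0 (N-1), ∑ j ∈ Finset.Icc 0 N,
            (if (j ≤ m ∧ m < i) ∨ (i ≤ m ∧ m < j) then (1:ℝ) else 0) * (dd p N i * p j) :=
          Finset.sum_congr rfl (fun i _ => Finset.sum_comm)
      _ = ∑ m ∈ Finset.Icc 0 (N-1), ∑ i ∈ Finset.Icc 0 N, ∑ j ∈ Finset.Icc 0 N,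
            (if (j ≤ m ∧ m < i) ∨ (i ≤ m ∧ m < j) then (1:ℝ) else 0) * (dd p N i * p j) :=
          Finset.sum_comm
  rw [step1]
  apply Finset.sum_congr rfl
  intro m hm
  simp only [Finset.mem_Icc] at hm
  have hsplitd := mysplit (dd p N) hm.1 (by omega : m ≤ N)
  rw [Esum hN h0 h1] at hsplitd
  have hptail : ∑ j ∈ Finset.Icc (m+1) N, p j = 1 - PP p m := by
    rw [Ssum hN h0 h1 (m+1), show m+1-1 = m by ring]
  have elow : ∀ i ∈ Finset.Icc (0:ℤ) m, ∑ j ∈ Finset.Icc 0 N,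
      (if (j ≤ m ∧ m < i) ∨ (i ≤ m ∧ m < j) then (1:ℝ) else 0) * (dd p N i * p j)
      = dd p N i * (1 - PP p m) := by
    intro i hi
    simp only [Finset.mem_Icc] at hi
    rw [mysplit _ hm.1 (by omega : m ≤ N)]
    have A : ∑ j ∈ Finset.Icc (0:ℤ) m,
        (if (j ≤ m ∧ m < i) ∨ (i ≤ m ∧ m < j) then (1:ℝ) else 0) * (dd p N i * p j) = 0 :=
      Finset.sum_eq_zero (fun j hj => by
        simp only [Finset.mem_Icc] at hj
        rw [if_neg (by omega), zero_mul])
    have B : ∑ j ∈ Finset.Icc (m+1) N,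
        (if (j ≤ m ∧ m < i) ∨ (i ≤ m ∧ m < j) then (1:ℝ) else 0) * (dd p N i * p j)
        = dd p N i * ∑ j ∈ Finset.Icc (m+1) N, p j := by
      rw [Finset.mul_sum]
      refine Finset.sum_congr rfl (fun j hj => ?_)
      simp only [Finset.mem_Icc] at hj
      rw [if_pos (by omega), one_mul]
    rw [A, B, hptail, zero_add]
  have ehigh : ∀ i ∈ Finset.Icc (m+1) N, ∑ j ∈ Finset.Icc 0 N,
      (if (j ≤ m ∧ m < i) ∨ (i ≤ m ∧ m < j) then (1:ℝ) else 0) * (dd p N i * p j)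
      = dd p N i * PP p m := by
    intro i hi
    simp only [Finset.mem_Icc] at hi
    rw [mysplit _ hm.1 (by omega : m ≤ N)]
    have A : ∑ j ∈ Finset.Icc (0:ℤ) m,
        (if (j ≤ m ∧ m < i) ∨ (i ≤ m ∧ m < j) then (1:ℝ) else 0) * (dd p N i * p j)
        = dd p N i * ∑ j ∈ Finset.Icc (0:ℤ) m, p j := by
      rw [Finset.mul_sum]
      refine Finset.sum_congr rfl (fun j hj => ?_)
      simp only [Finset.mem_Icc] at hj
      rw [if_pos (by omega), one_mul]
    have B : ∑ j ∈ Finset.Icc (m+1) N,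
        (if (j ≤ m ∧ m < i) ∨ (i ≤ m ∧ m < j) then (1:ℝ) else 0) * (dd p N i * p j) = 0 :=
      Finset.sum_eq_zero (fun j hj => by
        simp only [Finset.mem_Icc] at hj
        rw [if_neg (by omega), zero_mul])
    rw [A, B, add_zero, ← PP]
  rw [mysplit _ hm.1 (by omega : m ≤ N),
    Finset.sum_congr rfl elow, Finset.sum_congr rfl ehigh,
    ← Finset.sum_mul, ← Finset.sum_mul,
    show ∑ i ∈ Finset.Icc (m+1) N, dd p N i = - ∑ i ∈ Finset.Icc 0 m, dd p N i from by linarith]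
  ring

lemma keyE :
    ∑ m ∈ Finset.Icc 0 (N-1),
        (p (m+1) * PP p m - p m * (1 - PP p m)) * (1 - 2 * PP p m)
      = -2 * ∑ n ∈ Finset.Icc 0 N, PP p (n-1) * p n * (1 - PP p n) := by
  have hm1 : ((-1):ℤ) < 0 := by norm_num
  have e1 : ∑ m ∈ Finset.Icc 0 (N-1),
      (p (m+1) * PP p m - p m * (1 - PP p m)) * (1 - 2 * PP p m)
      = ∑ m ∈ Finset.Icc 0 (N-1), (p (m+1) * PP p m * (1 - 2 * PP p m))
        - ∑ m ∈ Finset.Icc 0 (N-1), (p m * (1 - PP p m) * (1 - 2 * PP p m)) := by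
    rw [← Finset.sum_sub_distrib]
    exact Finset.sum_congr rfl (fun m _ => by ring)
  have e2 : ∑ m ∈ Finset.Icc 0 (N-1), (p (m+1) * PP p m * (1 - 2 * PP p m))
      = ∑ n ∈ Finset.Icc 1 N, (p n * PP p (n-1) * (1 - 2 * PP p (n-1))) := by
    have h := myshift (fun n => p n * PP p (n-1) * (1 - 2 * PP p (n-1))) 0 (N-1)
    rw [show (0:ℤ)+1 = 1 by ring, show N-1+1 = N by ring] at h
    rw [h]
    exact Finset.sum_congr rfl (fun m _ => by rw [show m+1-1 = m by ring])
  have e3 : ∑ n ∈ Finset.Icc 0 N, (p n * PP p (n-1) * (1 - 2 * PP p (n-1)))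
      = ∑ n ∈ Finset.Icc 1 N, (p n * PP p (n-1) * (1 - 2 * PP p (n-1))) := by
    rw [mysplit _ (le_refl (0:ℤ)) (by omega : (0:ℤ) ≤ N), Finset.Icc_self,
      Finset.sum_singleton, show (0:ℤ)-1 = -1 by ring, PP_neg p hm1,
      show (0:ℤ)+1 = 1 by ring]
    ring
  have e4 : ∑ m ∈ Finset.Icc 0 N, (p m * (1 - PP p m) * (1 - 2 * PP p m))
      = ∑ m ∈ Finset.Icc 0 (N-1), (p m * (1 - PP p m) * (1 - 2 * PP p m)) := by
    rw [mysplit _ (by omega : (0:ℤ) ≤ N-1) (by omega : N-1 ≤ N),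
      show N-1+1 = N by ring, Finset.Icc_self, Finset.sum_singleton,
      PP_top hN h0 h1 le_rfl]
    ring
  have tele : ∑ n ∈ Finset.Icc 0 N,
      (3*PP p n^2 - 2*PP p n^3 - (3*PP p (n-1)^2 - 2*PP p (n-1)^3))
      = (3*PP p N^2 - 2*PP p N^3) - (3*PP p (-1)^2 - 2*PP p (-1)^3) :=
    mytele (fun x => 3*PP p x^2 - 2*PP p x^3) (by omega)
  have key : ∀ n ∈ Finset.Icc (0:ℤ) N,
      p n * PP p (n-1) * (1 - 2 * PP p (n-1)) - p n * (1 - PP p n) * (1 - 2 * PP p n)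
        + 2 * (PP p (n-1) * p n * (1 - PP p n))
      = 3*PP p n^2 - 2*PP p n^3 - (3*PP p (n-1)^2 - 2*PP p (n-1)^3) - p n := by
    intro n hn
    simp only [Finset.mem_Icc] at hn
    rw [PP_succ p hn.1]
    ring
  have e5 : ∑ n ∈ Finset.Icc 0 N,
      (p n * PP p (n-1) * (1 - 2 * PP p (n-1)) - p n * (1 - PP p n) * (1 - 2 * PP p n)
        + 2 * (PP p (n-1) * p n * (1 - PP p n))) = 0 := by
    calc ∑ n ∈ Finset.Icc 0 N,
        (p n * PP p (n-1) * (1 - 2 * PP p (n-1)) - p n * (1 - PP p n) * (1 - 2 * PP p n)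
          + 2 * (PP p (n-1) * p n * (1 - PP p n)))
        = ∑ n ∈ Finset.Icc 0 N,
            (3*PP p n^2 - 2*PP p n^3 - (3*PP p (n-1)^2 - 2*PP p (n-1)^3) - p n) :=
          Finset.sum_congr rfl key
      _ = ∑ n ∈ Finset.Icc 0 N,
            (3*PP p n^2 - 2*PP p n^3 - (3*PP p (n-1)^2 - 2*PP p (n-1)^3))
          - ∑ n ∈ Finset.Icc 0 N, p n := Finset.sum_sub_distrib _ _
      _ = 0 := by
          rw [tele, h1, PP_top hN h0 h1 le_rfl, PP_neg p hm1]
          norm_num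
  rw [Finset.sum_add_distrib, Finset.sum_sub_distrib, ← Finset.mul_sum] at e5
  rw [e1, e2, ← e3, ← e4]
  linarith

lemma keyF :
    ∑ l ∈ Finset.Icc 0 N, ∑ j ∈ Finset.Icc 0 (l-1), ∑ i ∈ Finset.Icc 0 (j-1),
        p i * p j * p l
      = ∑ n ∈ Finset.Icc 0 N, PP p (n-1) * p n * (1 - PP p n) := by
  have e1 : ∀ l ∈ Finset.Icc (0:ℤ) N,
      ∑ j ∈ Finset.Icc 0 (l-1), ∑ i ∈ Finset.Icc 0 (j-1), p i * p j * p l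
      = ∑ j ∈ Finset.Icc (0:ℤ) N, (if j < l then PP p (j-1) * p j * p l else 0) := by
    intro l hl
    simp only [Finset.mem_Icc] at hl
    have h2 : ∀ j : ℤ, ∑ i ∈ Finset.Icc 0 (j-1), p i * p j * p l
        = PP p (j-1) * p j * p l := by
      intro j
      rw [PP, Finset.sum_mul, Finset.sum_mul]
    rw [Finset.sum_congr rfl (fun j _ => h2 j), ← Finset.sum_filter]
    apply Finset.sum_congr ?_ (fun _ _ => rfl)
    ext x
    simp only [Finset.mem_Icc, Finset.mem_filter]
    omega
  rw [Finset.sum_congr rfl e1, Finset.sum_comm]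
  apply Finset.sum_congr rfl
  intro j hj
  simp only [Finset.mem_Icc] at hj
  have e2 : ∑ l ∈ Finset.Icc (0:ℤ) N, (if j < l then PP p (j-1) * p j * p l else 0)
      = ∑ l ∈ Finset.Icc (j+1) N, PP p (j-1) * p j * p l := by
    rw [← Finset.sum_filter]
    apply Finset.sum_congr ?_ (fun _ _ => rfl)
    ext x
    simp only [Finset.mem_Icc, Finset.mem_filter]
    omega
  rw [e2, ← Finset.mul_sum, Ssum hN h0 h1 (j+1), show j+1-1 = j by ring]

end main2



theorem stmt6 (k : ℕ) (hk : 0 < k) (q : ℝ → ℤ → ℝ)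
    (hout : ∀ t n, (n < 0 ∨ (2*k : ℤ) < n) → q t n = 0)
    (hpos : ∀ t n, 0 ≤ q t n)
    (hsum : ∀ t, ∑ n ∈ Finset.Icc (0:ℤ) (2*k), q t n = 1)
    (hode : ∀ t, ∀ n ∈ Finset.Icc (0:ℤ) (2*k),
      HasDerivAt (fun s => q s n)
        (q t (n-1) * (∑ j ∈ Finset.Icc n (2*k : ℤ), q t j)
          + q t (n+1) * (∑ j ∈ Finset.Icc (0:ℤ) n, q t j)
          - q t n * (1 - q t n)) t) :
    ∀ t : ℝ,
      HasDerivAt (fun s => (1/2) * ∑ i ∈ Finset.Icc (0:ℤ) (2*k),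
          ∑ j ∈ Finset.Icc (0:ℤ) (2*k), |(i : ℝ) - (j : ℝ)| * q s i * q s j)
        (-2 * ∑ l ∈ Finset.Icc (0:ℤ) (2*k), ∑ j ∈ Finset.Icc (0:ℤ) (l-1),
          ∑ i ∈ Finset.Icc (0:ℤ) (j-1), q t i * q t j * q t l) t
      ∧ -2 * ∑ l ∈ Finset.Icc (0:ℤ) (2*k), ∑ j ∈ Finset.Icc (0:ℤ) (l-1),
          ∑ i ∈ Finset.Icc (0:ℤ) (j-1), q t i * q t j * q t l ≤ 0 := by
  intro t
  have hN : (1:ℤ) ≤ (2*k : ℤ) := by omega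
  have h0 : ∀ n : ℤ, n < 0 ∨ (2*k : ℤ) < n → q t n = 0 := hout t
  have h1 : ∑ n ∈ Finset.Icc (0:ℤ) (2*k), q t n = 1 := hsum t
  have htriple : (0:ℝ) ≤ ∑ l ∈ Finset.Icc (0:ℤ) (2*k), ∑ j ∈ Finset.Icc (0:ℤ) (l-1),
      ∑ i ∈ Finset.Icc (0:ℤ) (j-1), q t i * q t j * q t l := by
    apply Finset.sum_nonneg; intro l _
    apply Finset.sum_nonneg; intro j _
    apply Finset.sum_nonneg; intro i _
    exact mul_nonneg (mul_nonneg (hpos t i) (hpos t j)) (hpos t l)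
  constructor
  · have hder : HasDerivAt (fun s => (1/2) * ∑ i ∈ Finset.Icc (0:ℤ) (2*k),
        ∑ j ∈ Finset.Icc (0:ℤ) (2*k), |(i : ℝ) - (j : ℝ)| * q s i * q s j)
        ((1/2) * ∑ i ∈ Finset.Icc (0:ℤ) (2*k), ∑ j ∈ Finset.Icc (0:ℤ) (2*k),
          (|(i : ℝ) - (j : ℝ)| * dd (q t) (2*k) i * q t j
            + |(i : ℝ) - (j : ℝ)| * q t i * dd (q t) (2*k) j)) t := by
      apply HasDerivAt.const_mul
      apply HasDerivAt.fun_sum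
      intro i hi
      apply HasDerivAt.fun_sum
      intro j hj
      exact (HasDerivAt.const_mul _ (hode t i hi)).mul (hode t j hj)
    have heq : (1/2) * (∑ i ∈ Finset.Icc (0:ℤ) (2*k), ∑ j ∈ Finset.Icc (0:ℤ) (2*k),
          (|(i : ℝ) - (j : ℝ)| * dd (q t) (2*k) i * q t j
            + |(i : ℝ) - (j : ℝ)| * q t i * dd (q t) (2*k) j))
        = -2 * ∑ l ∈ Finset.Icc (0:ℤ) (2*k), ∑ j ∈ Finset.Icc (0:ℤ) (l-1),
            ∑ i ∈ Finset.Icc (0:ℤ) (j-1), q t i * q t j * q t l := by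
      have c1 : ∑ i ∈ Finset.Icc (0:ℤ) (2*k), ∑ j ∈ Finset.Icc (0:ℤ) (2*k),
          (|(i : ℝ) - (j : ℝ)| * dd (q t) (2*k) i * q t j
            + |(i : ℝ) - (j : ℝ)| * q t i * dd (q t) (2*k) j)
          = (∑ i ∈ Finset.Icc (0:ℤ) (2*k), ∑ j ∈ Finset.Icc (0:ℤ) (2*k),
              |(i : ℝ) - (j : ℝ)| * (dd (q t) (2*k) i * q t j))
            + ∑ i ∈ Finset.Icc (0:ℤ) (2*k), ∑ j ∈ Finset.Icc (0:ℤ) (2*k),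
              |(i : ℝ) - (j : ℝ)| * (dd (q t) (2*k) i * q t j) := by
        have step : ∀ i ∈ Finset.Icc (0:ℤ) (2*k),
            ∑ j ∈ Finset.Icc (0:ℤ) (2*k),
              (|(i : ℝ) - (j : ℝ)| * dd (q t) (2*k) i * q t j
                + |(i : ℝ) - (j : ℝ)| * q t i * dd (q t) (2*k) j)
            = (∑ j ∈ Finset.Icc (0:ℤ) (2*k),
                |(i : ℝ) - (j : ℝ)| * dd (q t) (2*k) i * q t j)
              + ∑ j ∈ Finset.Icc (0:ℤ) (2*k),
                |(i : ℝ) - (j : ℝ)| * q t i * dd (q t) (2*k) j :=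
          fun i _ => Finset.sum_add_distrib
        rw [Finset.sum_congr rfl step, Finset.sum_add_distrib]
        congr 1
        · exact Finset.sum_congr rfl (fun i _ => Finset.sum_congr rfl
            (fun j _ => by ring))
        · rw [Finset.sum_comm]
          exact Finset.sum_congr rfl (fun i _ => Finset.sum_congr rfl
            (fun j _ => by rw [abs_sub_comm]; ring))
      have c2 : ∑ i ∈ Finset.Icc (0:ℤ) (2*k), ∑ j ∈ Finset.Icc (0:ℤ) (2*k),
          |(i : ℝ) - (j : ℝ)| * (dd (q t) (2*k) i * q t j)
          = -2 * ∑ l ∈ Finset.Icc (0:ℤ) (2*k), ∑ j ∈ Finset.Icc (0:ℤ) (l-1),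
              ∑ i ∈ Finset.Icc (0:ℤ) (j-1), q t i * q t j * q t l := by
        rw [keyC hN h0 h1]
        have step : ∀ m ∈ Finset.Icc (0:ℤ) ((2*k : ℤ)-1),
            (∑ i ∈ Finset.Icc 0 m, dd (q t) (2*k) i) * (1 - 2 * PP (q t) m)
            = (q t (m+1) * PP (q t) m - q t m * (1 - PP (q t) m)) * (1 - 2 * PP (q t) m) := by
          intro m hm
          simp only [Finset.mem_Icc] at hm
          rw [Dsum hN h0 h1 m hm.1]
        rw [Finset.sum_congr rfl step, keyE hN h0 h1, keyF hN h0 h1]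
      rw [c1, c2]
      ring
    rw [← heq]
    exact hder
  · linarith
end

section
/- Let q(t) solve the ODE system q_n' = q_{n-1} Σ_{j=n}^{2k} q_j + q_{n+1} Σ_{j=0}^{n} q_j - q_n(1 - q_n), 0 ≤ n ≤ 2k (with q_{-1} = q_{2k+1} = 0), with q(t) in the probability simplex. Then the mean μ(t) = Σ_{n=0}^{2k} n q_n(t) is constant in time. -/
lemma icc_eq_map (m : ℕ) :
    Finset.Icc (0:ℤ) ((m:ℤ) - 1)
      = (Finset.range m).map ⟨((↑·) : ℕ → ℤ), fun a b h => by simpa using h⟩ := by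
  ext x
  simp only [Finset.mem_Icc, Finset.mem_map, Finset.mem_range,
    Function.Embedding.coeFn_mk]
  constructor
  · rintro ⟨h0, h1⟩
    exact ⟨x.toNat, by omega, by exact Int.toNat_of_nonneg h0⟩
  · rintro ⟨a, ha, rfl⟩
    show 0 ≤ ((a:ℕ):ℤ) ∧ ((a:ℕ):ℤ) ≤ (m:ℤ) - 1
    omega

lemma sum_icc_eq_sum_range (g : ℤ → ℝ) (m : ℕ) :
    ∑ n ∈ Finset.Icc (0:ℤ) ((m:ℤ) - 1), g n = ∑ i ∈ Finset.range m, g i := by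
  rw [icc_eq_map, Finset.sum_map]
  rfl

noncomputable def Psum (p : ℤ → ℝ) (i : ℕ) : ℝ := ∑ j ∈ Finset.range i, p j

lemma Psum_zero (p : ℤ → ℝ) : Psum p 0 = 0 := by simp [Psum]

lemma Psum_succ (p : ℤ → ℝ) (i : ℕ) : Psum p (i+1) = Psum p i + p i :=
  Finset.sum_range_succ _ i

lemma Psum_eq_icc (p : ℤ → ℝ) (i : ℕ) :
    Psum p i = ∑ n ∈ Finset.Icc (0:ℤ) ((i:ℤ) - 1), p n :=
  (sum_icc_eq_sum_range p i).symm

lemma shift_sum (g : ℕ → ℝ) (N : ℕ) (h0 : g 0 = 0) (hN : g (N+1) = 0) :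
    ∑ i ∈ Finset.range (N+1), g (i+1) = ∑ i ∈ Finset.range (N+1), g i := by
  have h1 := Finset.sum_range_succ' g (N+1)
  rw [Finset.sum_range_succ g (N+1), h0, hN] at h1
  linarith

lemma key (k : ℕ) (p : ℤ → ℝ)
    (hout : ∀ n : ℤ, (n < 0 ∨ (2*k:ℤ) < n) → p n = 0)
    (hsum : ∑ n ∈ Finset.Icc (0:ℤ) (2*k:ℤ), p n = 1) :
    ∑ n ∈ Finset.Icc (0:ℤ) (2*k:ℤ), (n:ℝ) *
      (p (n-1) * (∑ j ∈ Finset.Icc n (2*k:ℤ), p j)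
        + p (n+1) * (∑ j ∈ Finset.Icc (0:ℤ) n, p j)
        - p n * (1 - p n)) = 0 := by
  set N : ℕ := 2*k with hN
  have hNk : (2*k:ℤ) = (N:ℤ) := by push_cast [hN]; ring
  rw [hNk] at hsum ⊢
  have hout' : ∀ n : ℤ, (n < 0 ∨ (N:ℤ) < n) → p n = 0 := by
    intro n hn; exact hout n (by omega)
  clear hout hNk
  have hP1 : Psum p (N+1) = 1 := by
    rw [Psum_eq_icc, show ((N+1:ℕ):ℤ) - 1 = (N:ℤ) by push_cast; ring, hsum]
  have htail : ∀ i : ℕ, i ≤ N → ∑ j ∈ Finset.Icc (i:ℤ) (N:ℤ), p j = 1 - Psum p i := by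
    intro i hi
    have hsplit : Finset.Icc (0:ℤ) (N:ℤ)
        = Finset.Icc (0:ℤ) ((i:ℤ)-1) ∪ Finset.Icc (i:ℤ) (N:ℤ) := by
      ext x
      simp only [Finset.mem_Icc, Finset.mem_union]
      omega
    have hdisj : Disjoint (Finset.Icc (0:ℤ) ((i:ℤ)-1)) (Finset.Icc (i:ℤ) (N:ℤ)) := by
      rw [Finset.disjoint_left]
      intro x hx hx'
      simp only [Finset.mem_Icc] at hx hx'
      omega
    have h2 := Finset.sum_union hdisj (f := p)
    rw [← hsplit, hsum, ← Psum_eq_icc] at h2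
    linarith
  have hhead : ∀ i : ℕ, ∑ j ∈ Finset.Icc (0:ℤ) (i:ℤ), p j = Psum p (i+1) := by
    intro i
    rw [Psum_eq_icc, show ((i+1:ℕ):ℤ) - 1 = (i:ℤ) by push_cast; ring]
  -- convert outer sum to a range sum
  have houter : Finset.Icc (0:ℤ) (N:ℤ) = Finset.Icc (0:ℤ) (((N+1:ℕ):ℤ) - 1) := by
    congr 1
    push_cast
    ring
  rw [houter, sum_icc_eq_sum_range]
  have hcong : ∀ i ∈ Finset.range (N+1), ((i:ℤ):ℝ) *
      (p ((i:ℤ)-1) * (∑ j ∈ Finset.Icc (i:ℤ) (N:ℤ), p j)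
        + p ((i:ℤ)+1) * (∑ j ∈ Finset.Icc (0:ℤ) (i:ℤ), p j)
        - p (i:ℤ) * (1 - p (i:ℤ)))
      = (i:ℝ) * (p ((i:ℤ)-1) * (1 - Psum p i))
        + (i:ℝ) * (p ((i:ℤ)+1) * Psum p (i+1))
        - (i:ℝ) * (p (i:ℤ) * (1 - p (i:ℤ))) := by
    intro i hi
    rw [Finset.mem_range] at hi
    rw [htail i (by omega), hhead i]
    push_cast
    ring
  rw [Finset.sum_congr rfl hcong, Finset.sum_sub_distrib, Finset.sum_add_distrib]
  have hE1 : ∑ i ∈ Finset.range (N+1), (i:ℝ) * (p ((i:ℤ)-1) * (1 - Psum p i))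
      = ∑ i ∈ Finset.range (N+1), ((i:ℝ)+1) * (p (i:ℤ) * (1 - Psum p (i+1))) := by
    have hs := shift_sum
      (fun j : ℕ => (j:ℝ) * (p ((j:ℤ)-1) * (1 - Psum p j))) N
      (by norm_num)
      (by
        have : Psum p (N+1) = 1 := hP1
        simp [this])
    refine Eq.trans (Finset.sum_congr rfl fun i _ => rfl).symm (hs.symm.trans ?_)
    refine Finset.sum_congr rfl fun i _ => ?_
    show ((i+1:ℕ):ℝ) * (p (((i+1:ℕ):ℤ)-1) * (1 - Psum p (i+1))) = _
    push_cast
    ring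
  have hE2 : ∑ i ∈ Finset.range (N+1), (i:ℝ) * (p ((i:ℤ)+1) * Psum p (i+1))
      = ∑ i ∈ Finset.range (N+1), ((i:ℝ)-1) * (p (i:ℤ) * Psum p i) := by
    have hs := shift_sum
      (fun j : ℕ => ((j:ℝ)-1) * (p (j:ℤ) * Psum p j)) N
      (by simp [Psum_zero])
      (by
        have hz : p ((N+1:ℕ):ℤ) = 0 := hout' _ (Or.inr (by push_cast; omega))
        show (((N+1:ℕ):ℝ)-1) * (p ((N+1:ℕ):ℤ) * Psum p (N+1)) = 0
        rw [hz]; ring)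
    refine Eq.trans ?_ hs
    refine Finset.sum_congr rfl fun i _ => ?_
    show _ = (((i+1:ℕ):ℝ) - 1) * (p ((i+1:ℕ):ℤ) * Psum p (i+1))
    push_cast
    ring
  rw [hE1, hE2, ← Finset.sum_add_distrib, ← Finset.sum_sub_distrib]
  have hfinal : ∀ i ∈ Finset.range (N+1),
      ((i:ℝ)+1) * (p (i:ℤ) * (1 - Psum p (i+1)))
        + ((i:ℝ)-1) * (p (i:ℤ) * Psum p i)
        - (i:ℝ) * (p (i:ℤ) * (1 - p (i:ℤ)))
      = p (i:ℤ) - ((Psum p (i+1))^2 - (Psum p i)^2) := by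
    intro i _
    rw [Psum_succ p i]
    ring
  rw [Finset.sum_congr rfl hfinal, Finset.sum_sub_distrib,
    Finset.sum_range_sub (fun i => (Psum p i)^2)]
  have hps : ∑ i ∈ Finset.range (N+1), p (i:ℤ) = Psum p (N+1) := rfl
  rw [hps, hP1, Psum_zero]
  norm_num

theorem stmt7 (k : ℕ) (hk : 0 < k) (q : ℝ → ℤ → ℝ)
    (hout : ∀ t n, (n < 0 ∨ (2*k : ℤ) < n) → q t n = 0)
    (hpos : ∀ t n, 0 ≤ q t n)
    (hsum : ∀ t, ∑ n ∈ Finset.Icc (0:ℤ) (2*k), q t n = 1)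
    (hode : ∀ t, ∀ n ∈ Finset.Icc (0:ℤ) (2*k),
      HasDerivAt (fun s => q s n)
        (q t (n-1) * (∑ j ∈ Finset.Icc n (2*k : ℤ), q t j)
          + q t (n+1) * (∑ j ∈ Finset.Icc (0:ℤ) n, q t j)
          - q t n * (1 - q t n)) t) :
    ∀ t₁ t₂ : ℝ,
      ∑ n ∈ Finset.Icc (0:ℤ) (2*k), (n : ℝ) * q t₁ n
        = ∑ n ∈ Finset.Icc (0:ℤ) (2*k), (n : ℝ) * q t₂ n := by
  have hconst : ∀ x : ℝ,
      HasDerivAt (fun s => ∑ n ∈ Finset.Icc (0:ℤ) (2*k), (n:ℝ) * q s n) 0 x := by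
    intro x
    have hd := HasDerivAt.sum (fun n hn => (hode x n hn).const_mul (n:ℝ))
    have hzero := key k (q x) (hout x) (hsum x)
    rwa [hzero, Finset.sum_fn] at hd
  exact is_const_of_deriv_eq_zero (fun x => (hconst x).differentiableAt)
    (fun x => (hconst x).deriv)
end

section
/- For k = 1 and a probability vector (q_0, q_1, q_2) with mean μ = q_1 + 2q_2, one has q_1 ≤ min{μ, 2 - μ}, and consequently G̃[q] - G̃[q*] = ((min{μ, 2-μ})² - q_1²)/2 ≥ 0, where G̃[q] = q_0 q_1 + q_1 q_2 + 2 q_0 q_2 and G̃[q*] = (1 - μ + ⌊μ⌋)(μ - ⌊μ⌋). -/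
theorem stmt9 (q0 q1 q2 : ℝ) (h0 : 0 ≤ q0) (h1 : 0 ≤ q1) (h2 : 0 ≤ q2)
    (hsum : q0 + q1 + q2 = 1) (μ : ℝ) (hμ : μ = q1 + 2*q2)
    (hμ0 : 0 < μ) (hμ2 : μ < 2) :
    q1 ≤ min μ (2 - μ)
    ∧ (q0*q1 + q1*q2 + 2*q0*q2) - (1 - μ + (Nat.floor μ : ℝ)) * (μ - (Nat.floor μ : ℝ))
        = ((min μ (2 - μ))^2 - q1^2) / 2
    ∧ 0 ≤ ((min μ (2 - μ))^2 - q1^2) / 2 := by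
  have hle : q1 ≤ min μ (2 - μ) := le_min (by linarith) (by linarith)
  refine ⟨hle, ?_, ?_⟩
  · rcases lt_or_ge μ 1 with hm | hm
    · rw [min_eq_left (by linarith)]
      have hf : (Nat.floor μ : ℝ) = 0 := by
        rw [Nat.floor_eq_zero.mpr hm]; norm_num
      rw [hf]; nlinarith
    · rw [min_eq_right (by linarith)]
      have hf : (Nat.floor μ : ℝ) = 1 := by
        have : Nat.floor μ = 1 := by
          rw [Nat.floor_eq_iff (by linarith : (0:ℝ) ≤ μ)]
          constructor <;> push_cast <;> linarith
        rw [this]; norm_num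
      rw [hf]; nlinarith
  · have hq : 0 ≤ min μ (2 - μ) := le_trans h1 hle
    nlinarith
end

section
/- Let q(t) be a classical solution in the probability simplex of the ODE system q_0' = (1 - q_0 - q_1) q_1, q_n' = q_{n-1} Σ_{j=0}^{n-2} q_j + q_{n+1} Σ_{j=n+2}^{2k} q_j - q_n(1 - q_n) for 0 < n < 2k, q_{2k}' = (1 - q_{2k-1} - q_{2k}) q_{2k-1}. Then d/dt [(1/2) Σ_{i,j=0}^{2k} |i-j| q_i q_j] = (q_0 - q_{2k})² Σ_{ℓ=1}^{2k-1} q_ℓ + Σ_{ℓ=1}^{2k-1} q_ℓ²(1 - q_ℓ) + Σ_{ℓ=1}^{2k-1} q_ℓ²(1 - q_ℓ - q_0 - q_{2k}) + 2 Σ_{1 ≤ i < j < ℓ ≤ 2k-1} q_i q_j q_ℓ, and this quantity is nonnegative. -/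
open Finset

private lemma aux_top (a c : ℤ) (h : a ≤ c) (f : ℤ → ℝ) :
    ∑ i ∈ Icc a c, f i = (∑ i ∈ Icc a (c-1), f i) + f c := by
  rw [show Icc a c = insert c (Icc a (c-1)) by
      ext x; simp only [Finset.mem_insert, Finset.mem_Icc]; omega,
    Finset.sum_insert (by simp only [Finset.mem_Icc]; omega)]
  ring

private lemma aux_bot (a c : ℤ) (h : a ≤ c) (f : ℤ → ℝ) :
    ∑ i ∈ Icc a c, f i = f a + (∑ i ∈ Icc (a+1) c, f i) := by
  rw [show Icc a c = insert a (Icc (a+1) c) by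
      ext x; simp only [Finset.mem_insert, Finset.mem_Icc]; omega,
    Finset.sum_insert (by simp only [Finset.mem_Icc]; omega)]

private lemma aux_split (a b c : ℤ) (h1 : a ≤ b + 1) (h2 : b ≤ c) (f : ℤ → ℝ) :
    ∑ i ∈ Icc a c, f i = (∑ i ∈ Icc a b, f i) + ∑ i ∈ Icc (b+1) c, f i := by
  rw [← Finset.sum_union (by
    rw [Finset.disjoint_left]; intro x hx hy
    simp only [Finset.mem_Icc] at hx hy; omega)]
  congr 1
  ext x; simp only [Finset.mem_union, Finset.mem_Icc]; omega

private lemma aux_tele (f : ℤ → ℝ) : ∀ b : ℤ, 0 ≤ b →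
    ∑ l ∈ Icc (1:ℤ) b, (f l - f (l-1)) = f b - f 0 := by
  refine Int.le_induction ?_ ?_
  · rw [Finset.Icc_eq_empty (by omega)]; simp
  · intro m hm ih
    rw [aux_top 1 (m+1) (by omega), show m+1-1 = m from by ring, ih]
    ring

private lemma reprW (N : ℤ) (x : ℤ → ℝ) (hsum : ∑ n ∈ Icc (0:ℤ) N, x n = 1) :
    (1/2) * ∑ i ∈ Icc (0:ℤ) N, ∑ j ∈ Icc (0:ℤ) N, |(i:ℝ) - (j:ℝ)| * x i * x j
      = ∑ m ∈ Icc (0:ℤ) (N-1), (∑ j ∈ Icc (0:ℤ) m, x j) * (1 - ∑ j ∈ Icc (0:ℤ) m, x j) := by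
  have habs : ∀ i ∈ Icc (0:ℤ) N, ∀ j ∈ Icc (0:ℤ) N,
      |(i:ℝ) - (j:ℝ)| * x i * x j
        = ∑ m ∈ Icc (0:ℤ) (N-1),
            ((if i ≤ m ∧ m < j then x i * x j else 0)
              + (if j ≤ m ∧ m < i then x i * x j else 0)) := by
    intro i hi j hj
    simp only [Finset.mem_Icc] at hi hj
    rw [Finset.sum_add_distrib]
    have c1 : ∑ m ∈ Icc (0:ℤ) (N-1), (if i ≤ m ∧ m < j then x i * x j else 0)
        = (((Icc i (j-1)).card : ℕ) : ℝ) * (x i * x j) := by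
      rw [← Finset.sum_filter,
        show (Icc (0:ℤ) (N-1)).filter (fun m => i ≤ m ∧ m < j) = Icc i (j-1) by
          ext m; simp only [Finset.mem_filter, Finset.mem_Icc]; omega,
        Finset.sum_const, nsmul_eq_mul]
    have c2 : ∑ m ∈ Icc (0:ℤ) (N-1), (if j ≤ m ∧ m < i then x i * x j else 0)
        = (((Icc j (i-1)).card : ℕ) : ℝ) * (x i * x j) := by
      rw [← Finset.sum_filter,
        show (Icc (0:ℤ) (N-1)).filter (fun m => j ≤ m ∧ m < i) = Icc j (i-1) by
          ext m; simp only [Finset.mem_filter, Finset.mem_Icc]; omega,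
        Finset.sum_const, nsmul_eq_mul]
    rw [c1, c2]
    have habs2 : |(i:ℝ) - (j:ℝ)| = (((Icc i (j-1)).card : ℕ) : ℝ) + (((Icc j (i-1)).card : ℕ) : ℝ) := by
      rw [Int.card_Icc, Int.card_Icc]
      have hz : ∀ z : ℤ, 0 ≤ z → ((z.toNat : ℕ) : ℝ) = ((z : ℤ) : ℝ) := by
        intro z hz0
        rw [← Int.cast_natCast, Int.toNat_of_nonneg hz0]
      rcases le_total i j with h | h
      · rw [abs_of_nonpos (sub_nonpos.mpr (Int.cast_le.mpr h)),
          show ((i - 1 + 1 - j).toNat : ℕ) = 0 from by omega, hz (j - 1 + 1 - i) (by omega)]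
        push_cast; ring
      · rw [abs_of_nonneg (sub_nonneg.mpr (Int.cast_le.mpr h)),
          show ((j - 1 + 1 - i).toNat : ℕ) = 0 from by omega, hz (i - 1 + 1 - j) (by omega)]
        push_cast; ring
    rw [habs2]; ring
  rw [Finset.sum_congr rfl (fun i hi => Finset.sum_congr rfl (fun j hj => habs i hi j hj))]
  rw [Finset.sum_congr rfl (fun i _ => Finset.sum_comm), Finset.sum_comm, Finset.mul_sum]
  refine Finset.sum_congr rfl ?_
  intro m hm
  simp only [Finset.mem_Icc] at hm
  have hsplitif : ∀ i j : ℤ,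
      (if i ≤ m ∧ m < j then x i * x j else 0)
        = (if i ≤ m then x i else 0) * (if m < j then x j else 0) := by
    intro i j
    by_cases h1 : i ≤ m <;> by_cases h2 : m < j <;> simp [h1, h2]
  have hfilterle : ∑ i ∈ Icc (0:ℤ) N, (if i ≤ m then x i else 0) = ∑ i ∈ Icc (0:ℤ) m, x i := by
    rw [← Finset.sum_filter,
      show (Icc (0:ℤ) N).filter (fun i => i ≤ m) = Icc 0 m by
        ext i; simp only [Finset.mem_filter, Finset.mem_Icc]; omega]
  have hfiltergt : ∑ i ∈ Icc (0:ℤ) N, (if m < i then x i else 0) = 1 - ∑ i ∈ Icc (0:ℤ) m, x i := by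
    rw [← Finset.sum_filter,
      show (Icc (0:ℤ) N).filter (fun i => m < i) = Icc (m+1) N by
        ext i; simp only [Finset.mem_filter, Finset.mem_Icc]; omega]
    have := aux_split 0 m N (by omega) (by omega) x
    rw [this] at hsum
    linarith
  have e1 : ∑ i ∈ Icc (0:ℤ) N, ∑ j ∈ Icc (0:ℤ) N, (if i ≤ m ∧ m < j then x i * x j else 0)
      = (∑ i ∈ Icc (0:ℤ) m, x i) * (1 - ∑ i ∈ Icc (0:ℤ) m, x i) := by
    calc ∑ i ∈ Icc (0:ℤ) N, ∑ j ∈ Icc (0:ℤ) N, (if i ≤ m ∧ m < j then x i * x j else 0)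
        = ∑ i ∈ Icc (0:ℤ) N, ∑ j ∈ Icc (0:ℤ) N,
            (if i ≤ m then x i else 0) * (if m < j then x j else 0) :=
          Finset.sum_congr rfl fun i _ => Finset.sum_congr rfl fun j _ => hsplitif i j
      _ = (∑ i ∈ Icc (0:ℤ) N, (if i ≤ m then x i else 0))
            * (∑ j ∈ Icc (0:ℤ) N, (if m < j then x j else 0)) :=
          (Finset.sum_mul_sum _ _ _ _).symm
      _ = (∑ i ∈ Icc (0:ℤ) m, x i) * (1 - ∑ i ∈ Icc (0:ℤ) m, x i) := by
          rw [hfilterle, hfiltergt]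
  have hsplitif2 : ∀ i j : ℤ,
      (if j ≤ m ∧ m < i then x i * x j else 0)
        = (if m < i then x i else 0) * (if j ≤ m then x j else 0) := by
    intro i j
    by_cases h1 : j ≤ m <;> by_cases h2 : m < i <;> simp [h1, h2, mul_comm]
  have e2 : ∑ i ∈ Icc (0:ℤ) N, ∑ j ∈ Icc (0:ℤ) N, (if j ≤ m ∧ m < i then x i * x j else 0)
      = (1 - ∑ i ∈ Icc (0:ℤ) m, x i) * (∑ i ∈ Icc (0:ℤ) m, x i) := by
    calc ∑ i ∈ Icc (0:ℤ) N, ∑ j ∈ Icc (0:ℤ) N, (if j ≤ m ∧ m < i then x i * x j else 0)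
        = ∑ i ∈ Icc (0:ℤ) N, ∑ j ∈ Icc (0:ℤ) N,
            (if m < i then x i else 0) * (if j ≤ m then x j else 0) :=
          Finset.sum_congr rfl fun i _ => Finset.sum_congr rfl fun j _ => hsplitif2 i j
      _ = (∑ i ∈ Icc (0:ℤ) N, (if m < i then x i else 0))
            * (∑ j ∈ Icc (0:ℤ) N, (if j ≤ m then x j else 0)) :=
          (Finset.sum_mul_sum _ _ _ _).symm
      _ = (1 - ∑ i ∈ Icc (0:ℤ) m, x i) * (∑ i ∈ Icc (0:ℤ) m, x i) := by
          rw [hfilterle, hfiltergt]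
  rw [Finset.sum_congr rfl fun i (_ : i ∈ Icc (0:ℤ) N) => Finset.sum_add_distrib,
    Finset.sum_add_distrib, e1, e2]
  ring

private lemma partialD (N : ℤ) (q d : ℤ → ℝ)
    (hd0 : d 0 = (1 - q 0 - q 1) * q 1)
    (hdn : ∀ n : ℤ, 0 < n → n < N →
      d n = q (n-1) * (∑ j ∈ Icc (0:ℤ) (n-2), q j)
        + q (n+1) * (∑ j ∈ Icc (n+2) N, q j) - q n * (1 - q n))
    (hsum : ∑ n ∈ Icc (0:ℤ) N, q n = 1) :
    ∀ m : ℤ, 0 ≤ m → m ≤ N - 1 →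
      ∑ n ∈ Icc (0:ℤ) m, d n
        = q (m+1) * (1 - ∑ j ∈ Icc (0:ℤ) (m+1), q j)
          - q m * (∑ j ∈ Icc (0:ℤ) (m-1), q j) := by
  have main : ∀ m : ℤ, 0 ≤ m → m ≤ N - 1 →
      ∑ n ∈ Icc (0:ℤ) m, d n
        = q (m+1) * (1 - ∑ j ∈ Icc (0:ℤ) (m+1), q j)
          - q m * (∑ j ∈ Icc (0:ℤ) (m-1), q j) := by
    refine Int.le_induction ?_ ?_
    · intro h
      rw [Finset.Icc_self, Finset.sum_singleton, hd0,
        Finset.Icc_eq_empty (show ¬ (0:ℤ) ≤ 0 - 1 from by omega), Finset.sum_empty,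
        aux_top 0 (0+1) (by omega), show (0:ℤ)+1-1 = 0 from by ring,
        Finset.Icc_self, Finset.sum_singleton]
      ring
    · intro m hm ih hm1
      rw [aux_top 0 (m+1) (by omega), show m+1-1 = m from by ring,
        ih (by omega), hdn (m+1) (by omega) (by omega)]
      simp only [show m+1-2 = m-1 from by ring, show m+1+2 = (m+2)+1 from by ring,
        show m+1+1 = m+2 from by ring]
      have hs1 : ∑ j ∈ Icc (0:ℤ) N, q j
          = (∑ j ∈ Icc (0:ℤ) (m+2), q j) + ∑ j ∈ Icc (m+2+1) N, q j :=
        aux_split 0 (m+2) N (by omega) (by omega) q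
      have hF2 : ∑ j ∈ Icc (0:ℤ) (m+2), q j = (∑ j ∈ Icc (0:ℤ) (m+1), q j) + q (m+2) := by
        rw [aux_top 0 (m+2) (by omega), show m+2-1 = m+1 from by ring]
      have hF1 : ∑ j ∈ Icc (0:ℤ) (m+1), q j = (∑ j ∈ Icc (0:ℤ) m, q j) + q (m+1) := by
        rw [aux_top 0 (m+1) (by omega), show m+1-1 = m from by ring]
      have hFm : ∑ j ∈ Icc (0:ℤ) m, q j = (∑ j ∈ Icc (0:ℤ) (m-1), q j) + q m := by
        rw [aux_top 0 m (by omega), show m-1 = m-1 from rfl]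
      have hrest : ∑ j ∈ Icc (m+2+1) N, q j = 1 - ∑ j ∈ Icc (0:ℤ) (m+2), q j := by
        rw [hsum] at hs1; linarith
      rw [hrest, hF2, hF1, hFm]
      ring
  exact main

private lemma finalAlg (N : ℤ) (hN : 2 ≤ N) (q : ℤ → ℝ)
    (hsum : ∑ n ∈ Icc (0:ℤ) N, q n = 1) :
    ∑ m ∈ Icc (0:ℤ) (N-1),
        ((q (m+1) * (1 - ∑ j ∈ Icc (0:ℤ) (m+1), q j)
          - q m * (∑ j ∈ Icc (0:ℤ) (m-1), q j))
          * (1 - 2 * ∑ j ∈ Icc (0:ℤ) m, q j))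
      = (q 0 - q N)^2 * (∑ l ∈ Icc (1:ℤ) (N-1), q l)
        + (∑ l ∈ Icc (1:ℤ) (N-1), (q l)^2 * (1 - q l))
        + (∑ l ∈ Icc (1:ℤ) (N-1), (q l)^2 * (1 - q l - q 0 - q N))
        + 2 * ∑ l ∈ Icc (1:ℤ) (N-1), ∑ j ∈ Icc (1:ℤ) (l-1),
            ∑ i ∈ Icc (1:ℤ) (j-1), q i * q j * q l := by
  -- q N in terms of q 0 and S
  have hb : q N = 1 - q 0 - (∑ j ∈ Icc (1:ℤ) (N-1), q j) := by
    have h1 : ∑ n ∈ Icc (0:ℤ) N, q n = q 0 + ∑ n ∈ Icc (1:ℤ) N, q n := by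
      have h := aux_bot 0 N (by omega) q; norm_num at h; exact h
    have h2 : ∑ n ∈ Icc (1:ℤ) N, q n = (∑ n ∈ Icc (1:ℤ) (N-1), q n) + q N :=
      aux_top 1 N (by omega) q
    rw [h1, h2] at hsum; linarith
  -- the double-sum lemma
  have Plem : ∀ m : ℤ, 0 ≤ m →
      ∑ j ∈ Icc (1:ℤ) m, ∑ i ∈ Icc (1:ℤ) (j-1), q i * q j
        = ((∑ j ∈ Icc (1:ℤ) m, q j)^2 - ∑ j ∈ Icc (1:ℤ) m, (q j)^2) / 2 := by
    refine Int.le_induction ?_ ?_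
    · rw [Finset.Icc_eq_empty (show ¬(1:ℤ) ≤ 0 from by omega)]; simp
    · intro m hm ih
      rw [aux_top 1 (m+1) (by omega), aux_top 1 (m+1) (by omega) q,
        aux_top 1 (m+1) (by omega) (fun j => (q j)^2),
        show m+1-1 = m from by ring, ih, ← Finset.sum_mul]
      ring
  -- LHS into difference of two sums
  have L1 : ∑ m ∈ Icc (0:ℤ) (N-1),
        ((q (m+1) * (1 - ∑ j ∈ Icc (0:ℤ) (m+1), q j)
          - q m * (∑ j ∈ Icc (0:ℤ) (m-1), q j))
          * (1 - 2 * ∑ j ∈ Icc (0:ℤ) m, q j))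
      = (∑ m ∈ Icc (0:ℤ) (N-1), q (m+1) * (1 - ∑ j ∈ Icc (0:ℤ) (m+1), q j)
          * (1 - 2 * ∑ j ∈ Icc (0:ℤ) m, q j))
        - ∑ m ∈ Icc (0:ℤ) (N-1), q m * (∑ j ∈ Icc (0:ℤ) (m-1), q j)
          * (1 - 2 * ∑ j ∈ Icc (0:ℤ) m, q j) := by
    rw [← Finset.sum_sub_distrib]
    exact Finset.sum_congr rfl fun m _ => by ring
  have T1 : ∑ m ∈ Icc (0:ℤ) (N-1), (q (m+1) * (1 - ∑ j ∈ Icc (0:ℤ) (m+1), q j)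
        * (1 - 2 * ∑ j ∈ Icc (0:ℤ) m, q j))
      = ∑ l ∈ Icc (1:ℤ) N, (q l * (1 - ∑ j ∈ Icc (0:ℤ) l, q j)
        * (1 - 2 * ∑ j ∈ Icc (0:ℤ) (l-1), q j)) := by
    have h := Finset.sum_map (Icc (0:ℤ) (N-1)) (addRightEmbedding 1)
      (fun l => q l * (1 - ∑ j ∈ Icc (0:ℤ) l, q j) * (1 - 2 * ∑ j ∈ Icc (0:ℤ) (l-1), q j))
    rw [Finset.map_add_right_Icc] at h
    simp only [addRightEmbedding_apply, add_sub_cancel_right, zero_add, sub_add_cancel] at h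
    exact h.symm
  have T1top : ∑ l ∈ Icc (1:ℤ) N, (q l * (1 - ∑ j ∈ Icc (0:ℤ) l, q j)
        * (1 - 2 * ∑ j ∈ Icc (0:ℤ) (l-1), q j))
      = ∑ l ∈ Icc (1:ℤ) (N-1), (q l * (1 - ∑ j ∈ Icc (0:ℤ) l, q j)
        * (1 - 2 * ∑ j ∈ Icc (0:ℤ) (l-1), q j)) := by
    rw [aux_top 1 N (by omega), hsum]
    ring
  have T2bot : ∑ m ∈ Icc (0:ℤ) (N-1), (q m * (∑ j ∈ Icc (0:ℤ) (m-1), q j)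
        * (1 - 2 * ∑ j ∈ Icc (0:ℤ) m, q j))
      = ∑ m ∈ Icc (1:ℤ) (N-1), (q m * (∑ j ∈ Icc (0:ℤ) (m-1), q j)
        * (1 - 2 * ∑ j ∈ Icc (0:ℤ) m, q j)) := by
    have h := aux_bot 0 (N-1) (by omega)
      (fun m => q m * (∑ j ∈ Icc (0:ℤ) (m-1), q j) * (1 - 2 * ∑ j ∈ Icc (0:ℤ) m, q j))
    norm_num at h
    exact h
  rw [L1, T1, T1top, T2bot, ← Finset.sum_sub_distrib]
  -- RHS: fold the four sums into one
  rw [Finset.mul_sum, Finset.mul_sum, ← Finset.sum_add_distrib, ← Finset.sum_add_distrib,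
    ← Finset.sum_add_distrib]
  -- now one sum = one sum; compare via the telescoping correction
  have key : ∀ l ∈ Icc (1:ℤ) (N-1),
      (q l * (1 - ∑ j ∈ Icc (0:ℤ) l, q j) * (1 - 2 * ∑ j ∈ Icc (0:ℤ) (l-1), q j)
        - q l * (∑ j ∈ Icc (0:ℤ) (l-1), q j) * (1 - 2 * ∑ j ∈ Icc (0:ℤ) l, q j))
      - ((q 0 - q N)^2 * q l + (q l)^2 * (1 - q l) + (q l)^2 * (1 - q l - q 0 - q N)
          + 2 * ∑ j ∈ Icc (1:ℤ) (l-1), ∑ i ∈ Icc (1:ℤ) (j-1), q i * q j * q l)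
      = (((∑ j ∈ Icc (1:ℤ) l, q j)^3
            + (4*q 0 - 2)*(∑ j ∈ Icc (1:ℤ) l, q j)^2
            + (∑ j ∈ Icc (1:ℤ) l, q j)*(∑ j ∈ Icc (1:ℤ) l, (q j)^2)
            - (∑ j ∈ Icc (1:ℤ) (N-1), q j)*(∑ j ∈ Icc (1:ℤ) l, (q j)^2))
          - ((∑ j ∈ Icc (1:ℤ) (l-1), q j)^3
            + (4*q 0 - 2)*(∑ j ∈ Icc (1:ℤ) (l-1), q j)^2
            + (∑ j ∈ Icc (1:ℤ) (l-1), q j)*(∑ j ∈ Icc (1:ℤ) (l-1), (q j)^2)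
            - (∑ j ∈ Icc (1:ℤ) (N-1), q j)*(∑ j ∈ Icc (1:ℤ) (l-1), (q j)^2)))
        + q l * (2*(∑ j ∈ Icc (1:ℤ) (N-1), q j) - 4*q 0*(∑ j ∈ Icc (1:ℤ) (N-1), q j)
            - (∑ j ∈ Icc (1:ℤ) (N-1), q j)^2) := by
    intro l hl
    simp only [Finset.mem_Icc] at hl
    have htr : ∑ j ∈ Icc (1:ℤ) (l-1), ∑ i ∈ Icc (1:ℤ) (j-1), q i * q j * q l
        = (((∑ j ∈ Icc (1:ℤ) (l-1), q j)^2 - ∑ j ∈ Icc (1:ℤ) (l-1), (q j)^2) / 2) * q l := by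
      have e : ∑ j ∈ Icc (1:ℤ) (l-1), ∑ i ∈ Icc (1:ℤ) (j-1), q i * q j * q l
          = (∑ j ∈ Icc (1:ℤ) (l-1), ∑ i ∈ Icc (1:ℤ) (j-1), q i * q j) * q l := by
        rw [Finset.sum_mul]
        exact Finset.sum_congr rfl fun j _ => by rw [Finset.sum_mul]
      rw [e, Plem (l-1) (by omega)]
    have hFl : ∑ j ∈ Icc (0:ℤ) l, q j = q 0 + ∑ j ∈ Icc (1:ℤ) l, q j := by
      have h := aux_bot 0 l (by omega) q; norm_num at h; exact h
    have hFl1 : ∑ j ∈ Icc (0:ℤ) (l-1), q j = q 0 + ∑ j ∈ Icc (1:ℤ) (l-1), q j := by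
      have h := aux_bot 0 (l-1) (by omega) q; norm_num at h; exact h
    have hGl : ∑ j ∈ Icc (1:ℤ) l, q j = (∑ j ∈ Icc (1:ℤ) (l-1), q j) + q l :=
      aux_top 1 l (by omega) q
    have hQl : ∑ j ∈ Icc (1:ℤ) l, (q j)^2 = (∑ j ∈ Icc (1:ℤ) (l-1), (q j)^2) + (q l)^2 :=
      aux_top 1 l (by omega) (fun j => (q j)^2)
    rw [htr, hFl, hFl1, hGl, hQl, hb]
    ring
  have sumeq : ∑ l ∈ Icc (1:ℤ) (N-1),
      ((q l * (1 - ∑ j ∈ Icc (0:ℤ) l, q j) * (1 - 2 * ∑ j ∈ Icc (0:ℤ) (l-1), q j)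
        - q l * (∑ j ∈ Icc (0:ℤ) (l-1), q j) * (1 - 2 * ∑ j ∈ Icc (0:ℤ) l, q j))
      - ((q 0 - q N)^2 * q l + (q l)^2 * (1 - q l) + (q l)^2 * (1 - q l - q 0 - q N)
          + 2 * ∑ j ∈ Icc (1:ℤ) (l-1), ∑ i ∈ Icc (1:ℤ) (j-1), q i * q j * q l)) = 0 := by
    rw [Finset.sum_congr rfl key, Finset.sum_add_distrib,
      aux_tele (fun m => (∑ j ∈ Icc (1:ℤ) m, q j)^3
            + (4*q 0 - 2)*(∑ j ∈ Icc (1:ℤ) m, q j)^2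
            + (∑ j ∈ Icc (1:ℤ) m, q j)*(∑ j ∈ Icc (1:ℤ) m, (q j)^2)
            - (∑ j ∈ Icc (1:ℤ) (N-1), q j)*(∑ j ∈ Icc (1:ℤ) m, (q j)^2)) (N-1) (by omega),
      ← Finset.sum_mul]
    rw [Finset.Icc_eq_empty (show ¬(1:ℤ) ≤ 0 from by omega)]
    simp only [Finset.sum_empty]
    ring
  rw [Finset.sum_sub_distrib] at sumeq
  exact sub_eq_zero.mp sumeq


theorem stmt12 (k : ℕ) (hk : 0 < k) (q : ℝ → ℤ → ℝ)
    (hpos : ∀ t n, 0 ≤ q t n)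
    (hsum : ∀ t, ∑ n ∈ Finset.Icc (0:ℤ) (2*k), q t n = 1)
    (hode0 : ∀ t, HasDerivAt (fun s => q s 0) ((1 - q t 0 - q t 1) * q t 1) t)
    (hoden : ∀ t, ∀ n : ℤ, 0 < n → n < 2*k →
      HasDerivAt (fun s => q s n)
        (q t (n-1) * (∑ j ∈ Finset.Icc (0:ℤ) (n-2), q t j)
          + q t (n+1) * (∑ j ∈ Finset.Icc (n+2) (2*k : ℤ), q t j)
          - q t n * (1 - q t n)) t)
    (hode2k : ∀ t, HasDerivAt (fun s => q s (2*k))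
      ((1 - q t (2*k-1) - q t (2*k)) * q t (2*k-1)) t) :
    ∀ t : ℝ,
      HasDerivAt (fun s => (1/2) * ∑ i ∈ Finset.Icc (0:ℤ) (2*k),
          ∑ j ∈ Finset.Icc (0:ℤ) (2*k), |(i : ℝ) - (j : ℝ)| * q s i * q s j)
        ((q t 0 - q t (2*k))^2 * (∑ l ∈ Finset.Icc (1:ℤ) (2*k-1), q t l)
          + (∑ l ∈ Finset.Icc (1:ℤ) (2*k-1), (q t l)^2 * (1 - q t l))
          + (∑ l ∈ Finset.Icc (1:ℤ) (2*k-1), (q t l)^2 * (1 - q t l - q t 0 - q t (2*k)))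
          + 2 * ∑ l ∈ Finset.Icc (1:ℤ) (2*k-1), ∑ j ∈ Finset.Icc (1:ℤ) (l-1),
              ∑ i ∈ Finset.Icc (1:ℤ) (j-1), q t i * q t j * q t l) t
      ∧ 0 ≤ (q t 0 - q t (2*k))^2 * (∑ l ∈ Finset.Icc (1:ℤ) (2*k-1), q t l)
          + (∑ l ∈ Finset.Icc (1:ℤ) (2*k-1), (q t l)^2 * (1 - q t l))
          + (∑ l ∈ Finset.Icc (1:ℤ) (2*k-1), (q t l)^2 * (1 - q t l - q t 0 - q t (2*k)))
          + 2 * ∑ l ∈ Finset.Icc (1:ℤ) (2*k-1), ∑ j ∈ Finset.Icc (1:ℤ) (l-1),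
              ∑ i ∈ Finset.Icc (1:ℤ) (j-1), q t i * q t j * q t l := by
  intro t
  have hN : (2:ℤ) ≤ 2*(k:ℤ) := by omega
  -- the derivative of each coordinate
  set d : ℤ → ℝ := fun n =>
    if n = 0 then (1 - q t 0 - q t 1) * q t 1
    else if n = 2*(k:ℤ) then (1 - q t (2*(k:ℤ)-1) - q t (2*(k:ℤ))) * q t (2*(k:ℤ)-1)
    else q t (n-1) * (∑ j ∈ Icc (0:ℤ) (n-2), q t j)
      + q t (n+1) * (∑ j ∈ Icc (n+2) (2*(k:ℤ)), q t j) - q t n * (1 - q t n) with hd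
  have hd0 : d 0 = (1 - q t 0 - q t 1) * q t 1 := by
    simp only [hd]
    split_ifs with h1 h2 <;> first | rfl | omega
  have hdN : d (2*(k:ℤ)) = (1 - q t (2*(k:ℤ)-1) - q t (2*(k:ℤ))) * q t (2*(k:ℤ)-1) := by
    simp only [hd]
    split_ifs with h1 h2 <;> first | rfl | omega
  have hdn : ∀ n : ℤ, 0 < n → n < 2*(k:ℤ) →
      d n = q t (n-1) * (∑ j ∈ Icc (0:ℤ) (n-2), q t j)
        + q t (n+1) * (∑ j ∈ Icc (n+2) (2*(k:ℤ)), q t j) - q t n * (1 - q t n) := by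
    intro n h1 h2
    simp only [hd]
    split_ifs with hh1 hh2 <;> first | rfl | omega
  have hq : ∀ n ∈ Icc (0:ℤ) (2*(k:ℤ)), HasDerivAt (fun s => q s n) (d n) t := by
    intro n hn
    simp only [Finset.mem_Icc] at hn
    by_cases h0 : n = 0
    · subst h0
      rw [hd0]
      exact hode0 t
    · by_cases h2k : n = 2*(k:ℤ)
      · subst h2k
        rw [hdN]
        exact hode2k t
      · rw [hdn n (by omega) (by omega)]
        exact hoden t n (by omega) (by omega)
  constructor
  · -- derivative part
    have funeq : (fun s => (1/2) * ∑ i ∈ Finset.Icc (0:ℤ) (2*(k:ℤ)),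
          ∑ j ∈ Finset.Icc (0:ℤ) (2*(k:ℤ)), |(i : ℝ) - (j : ℝ)| * q s i * q s j)
        = (fun s => ∑ m ∈ Icc (0:ℤ) (2*(k:ℤ)-1),
            (∑ j ∈ Icc (0:ℤ) m, q s j) * (1 - ∑ j ∈ Icc (0:ℤ) m, q s j)) :=
      funext fun s => reprW (2*(k:ℤ)) (q s) (hsum s)
    rw [funeq]
    have hF : ∀ m ∈ Icc (0:ℤ) (2*(k:ℤ)-1),
        HasDerivAt (fun s => ∑ j ∈ Icc (0:ℤ) m, q s j) (∑ j ∈ Icc (0:ℤ) m, d j) t := by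
      intro m hm
      simp only [Finset.mem_Icc] at hm
      exact HasDerivAt.fun_sum fun j hj =>
        hq j (by simp only [Finset.mem_Icc] at hj ⊢; omega)
    have hW : HasDerivAt (fun s => ∑ m ∈ Icc (0:ℤ) (2*(k:ℤ)-1),
          (∑ j ∈ Icc (0:ℤ) m, q s j) * (1 - ∑ j ∈ Icc (0:ℤ) m, q s j))
        (∑ m ∈ Icc (0:ℤ) (2*(k:ℤ)-1),
          ((∑ j ∈ Icc (0:ℤ) m, d j) * (1 - ∑ j ∈ Icc (0:ℤ) m, q t j)
            + (∑ j ∈ Icc (0:ℤ) m, q t j) * (0 - ∑ j ∈ Icc (0:ℤ) m, d j))) t :=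
      HasDerivAt.fun_sum fun m hm =>
        (hF m hm).mul ((hasDerivAt_const t (1:ℝ)).sub (hF m hm))
    have hval : ∑ m ∈ Icc (0:ℤ) (2*(k:ℤ)-1),
          ((∑ j ∈ Icc (0:ℤ) m, d j) * (1 - ∑ j ∈ Icc (0:ℤ) m, q t j)
            + (∑ j ∈ Icc (0:ℤ) m, q t j) * (0 - ∑ j ∈ Icc (0:ℤ) m, d j))
        = ∑ m ∈ Icc (0:ℤ) (2*(k:ℤ)-1),
          ((q t (m+1) * (1 - ∑ j ∈ Icc (0:ℤ) (m+1), q t j)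
            - q t m * (∑ j ∈ Icc (0:ℤ) (m-1), q t j))
            * (1 - 2 * ∑ j ∈ Icc (0:ℤ) m, q t j)) := by
      refine Finset.sum_congr rfl fun m hm => ?_
      simp only [Finset.mem_Icc] at hm
      rw [partialD (2*(k:ℤ)) (q t) d hd0 hdn (hsum t) m hm.1 hm.2]
      ring
    rw [hval, finalAlg (2*(k:ℤ)) hN (q t) (hsum t)] at hW
    exact hW
  · -- nonnegativity
    have hle : ∀ l : ℤ, 1 ≤ l → l ≤ 2*(k:ℤ)-1 →
        q t l + q t 0 + q t (2*(k:ℤ)) ≤ 1 := by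
      intro l h1 h2
      have hsub : ({0, l, 2*(k:ℤ)} : Finset ℤ) ⊆ Icc (0:ℤ) (2*(k:ℤ)) := by
        intro x hx
        simp only [Finset.mem_insert, Finset.mem_singleton] at hx
        simp only [Finset.mem_Icc]
        rcases hx with h | h | h <;> omega
      have hsumle : ∑ x ∈ ({0, l, 2*(k:ℤ)} : Finset ℤ), q t x
          ≤ ∑ x ∈ Icc (0:ℤ) (2*(k:ℤ)), q t x :=
        Finset.sum_le_sum_of_subset_of_nonneg hsub fun i _ _ => hpos t i
      have heval : ∑ x ∈ ({0, l, 2*(k:ℤ)} : Finset ℤ), q t x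
          = q t 0 + q t l + q t (2*(k:ℤ)) := by
        rw [Finset.sum_insert (by
            simp only [Finset.mem_insert, Finset.mem_singleton]; push_neg
            constructor <;> omega),
          Finset.sum_insert (by simp only [Finset.mem_singleton]; omega),
          Finset.sum_singleton]
        ring
      rw [heval, hsum t] at hsumle
      linarith
    have h1 : 0 ≤ (q t 0 - q t (2*(k:ℤ)))^2 * (∑ l ∈ Icc (1:ℤ) (2*(k:ℤ)-1), q t l) :=
      mul_nonneg (sq_nonneg _) (Finset.sum_nonneg fun l _ => hpos t l)
    have h2 : 0 ≤ ∑ l ∈ Icc (1:ℤ) (2*(k:ℤ)-1), (q t l)^2 * (1 - q t l) := by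
      refine Finset.sum_nonneg fun l hl => ?_
      simp only [Finset.mem_Icc] at hl
      have := hle l hl.1 hl.2
      have h0 := hpos t 0
      have h2k := hpos t (2*(k:ℤ))
      exact mul_nonneg (sq_nonneg _) (by linarith)
    have h3 : 0 ≤ ∑ l ∈ Icc (1:ℤ) (2*(k:ℤ)-1), (q t l)^2 * (1 - q t l - q t 0 - q t (2*(k:ℤ))) := by
      refine Finset.sum_nonneg fun l hl => ?_
      simp only [Finset.mem_Icc] at hl
      have := hle l hl.1 hl.2
      exact mul_nonneg (sq_nonneg _) (by linarith)
    have h4 : 0 ≤ 2 * ∑ l ∈ Icc (1:ℤ) (2*(k:ℤ)-1), ∑ j ∈ Icc (1:ℤ) (l-1),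
        ∑ i ∈ Icc (1:ℤ) (j-1), q t i * q t j * q t l := by
      refine mul_nonneg (by norm_num) (Finset.sum_nonneg fun l _ => ?_)
      refine Finset.sum_nonneg fun j _ => Finset.sum_nonneg fun i _ => ?_
      exact mul_nonneg (mul_nonneg (hpos t i) (hpos t j)) (hpos t l)
    linarith
end

section
/- Let q(t) be a classical solution in the probability simplex of the α=0 system (q_0' = (1-q_0-q_1)q_1, q_n' = q_{n-1}Σ_{j≤n-2}q_j + q_{n+1}Σ_{j≥n+2}q_j - q_n(1-q_n), q_{2k}' = (1-q_{2k-1}-q_{2k})q_{2k-1}). Then the mean μ(t) = Σ_{n=0}^{2k} n q_n(t) satisfies μ'(t) = (q_0(t) - q_{2k}(t))(1 - q_0(t) - q_{2k}(t)). -/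
lemma sum_Icc_int_eq (f : ℤ → ℝ) (M : ℕ) :
    ∑ n ∈ Finset.Icc (0:ℤ) (M:ℤ), f n = ∑ i ∈ Finset.range (M+1), f (i:ℤ) := by
  refine Finset.sum_nbij' (fun n => n.toNat) (fun i => (i:ℤ)) ?_ ?_ ?_ ?_ ?_ <;>
    intro a ha <;> simp [Finset.mem_Icc, Finset.mem_range] at * <;>
    first
    | omega
    | (congr 1; omega)

lemma sum_Icc_int_eq' (f : ℤ → ℝ) (a : ℕ) :
    ∑ n ∈ Finset.Icc (0:ℤ) ((a:ℤ)-1), f n = ∑ i ∈ Finset.range a, f (i:ℤ) := by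
  cases a with
  | zero => simp
  | succ b =>
      have : ((b+1 : ℕ):ℤ) - 1 = (b:ℤ) := by push_cast; ring
      rw [this, sum_Icc_int_eq]

lemma split_Icc_int (f : ℤ → ℝ) (a b : ℤ) (h0 : 0 ≤ a) (hab : a ≤ b + 1) :
    ∑ n ∈ Finset.Icc (0:ℤ) b, f n
      = ∑ n ∈ Finset.Icc (0:ℤ) (a-1), f n + ∑ n ∈ Finset.Icc a b, f n := by
  have hset : Finset.Icc (0:ℤ) b = Finset.Icc 0 (a-1) ∪ Finset.Icc a b := by
    ext x; simp only [Finset.mem_union, Finset.mem_Icc]; omega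
  rw [hset, Finset.sum_union]
  rw [Finset.disjoint_left]
  intro x hx hx'
  simp only [Finset.mem_Icc] at hx hx'
  omega

lemma key_s13 (M : ℕ) (s : ℕ → ℝ)
    (h1 : ∑ i ∈ Finset.range (M+3), s i = 1) :
    ∑ n ∈ Finset.range (M+3), (n:ℝ) *
      (if n = 0 then (1 - s 0 - s 1) * s 1
       else if n = M+2 then (1 - s (M+1) - s (M+2)) * s (M+1)
       else s (n-1) * (∑ j ∈ Finset.range (n-1), s j)
         + s (n+1) * (1 - ∑ j ∈ Finset.range (n+2), s j)
         - s n * (1 - s n))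
    = (s 0 - s (M+2)) * (1 - s 0 - s (M+2)) := by
  set P : ℕ → ℝ := fun j => ∑ i ∈ Finset.range j, s i with hPdef
  have hfold : ∀ j, (∑ i ∈ Finset.range j, s i) = P j := fun _ => rfl
  have hPsucc : ∀ n, P (n+1) = P n + s n := fun n => Finset.sum_range_succ s n
  have hP0 : P 0 = 0 := Finset.sum_range_zero s
  have hP1 : P 1 = s 0 := by rw [hPsucc, hP0]; ring
  have hPtop : P (M+3) = 1 := h1
  have hPm2 : P (M+2) = 1 - s (M+2) := by
    have := hPtop; rw [hPsucc] at this; linarith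
  have hPm1 : P (M+1) = 1 - s (M+1) - s (M+2) := by
    have := hPm2; rw [hPsucc] at this; linarith
  set SA := ∑ i ∈ Finset.range (M+3), ((i:ℝ)+1)*(s i*P i) with hSA
  set SB := ∑ i ∈ Finset.range (M+3), ((i:ℝ)-1)*(s i*(1-P (i+1))) with hSB
  set SC := ∑ i ∈ Finset.range (M+3), (i:ℝ)*(s i*(1-s i)) with hSC
  have hU : SA + SB - SC = 0 := by
    rw [hSA, hSB, hSC, ← Finset.sum_add_distrib, ← Finset.sum_sub_distrib]
    have e1 : ∀ n : ℕ, ((n:ℝ)+1)*(s n*P n) + ((n:ℝ)-1)*(s n*(1-P (n+1))) - (n:ℝ)*(s n*(1-s n))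
        = (P (n+1)^2 - P n^2) - s n := by
      intro n; rw [hPsucc n]; ring
    rw [Finset.sum_congr rfl (fun n _ => e1 n), Finset.sum_sub_distrib,
      Finset.sum_range_sub (fun n => P n ^ 2), h1, hPtop, hP0]
    ring
  rw [Finset.sum_range_succ]
  rw [if_neg (by omega), if_pos rfl]
  have hmid : ∀ n ∈ Finset.range (M+2), (n:ℝ) *
      (if n = 0 then (1 - s 0 - s 1) * s 1
       else if n = M+2 then (1 - s (M+1) - s (M+2)) * s (M+1)
       else s (n-1) * (∑ j ∈ Finset.range (n-1), s j)
         + s (n+1) * (1 - ∑ j ∈ Finset.range (n+2), s j)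
         - s n * (1 - s n))
      = (n:ℝ)*(s (n-1)*P (n-1)) + (n:ℝ)*(s (n+1)*(1-P (n+2))) - (n:ℝ)*(s n*(1-s n)) := by
    intro n hn
    rcases Nat.eq_zero_or_pos n with rfl | hn0
    · simp
    · rw [if_neg (by omega), if_neg (by simp at hn; omega), hfold, hfold]
      ring
  rw [Finset.sum_congr rfl hmid, Finset.sum_sub_distrib, Finset.sum_add_distrib]
  have hA : ∑ n ∈ Finset.range (M+2), (n:ℝ)*(s (n-1)*P (n-1))
      = ∑ i ∈ Finset.range (M+1), ((i:ℝ)+1)*(s i*P i) := by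
    rw [Finset.sum_range_succ' (fun n => (n:ℝ)*(s (n-1)*P (n-1))) (M+1)]
    have : ∀ i ∈ Finset.range (M+1),
        ((↑(i+1):ℝ))*(s (i+1-1)*P (i+1-1)) = ((i:ℝ)+1)*(s i*P i) := by
      intro i _; push_cast; norm_num
    rw [Finset.sum_congr rfl this]
    norm_num
  have hW : ∑ i ∈ Finset.range (M+1), ((i:ℝ)+1)*(s i*P i)
      = SA - ((M:ℝ)+1+1)*(s (M+1)*P (M+1)) - ((M:ℝ)+2+1)*(s (M+2)*P (M+2)) := by
    conv_rhs => rw [hSA, Finset.sum_range_succ, Finset.sum_range_succ]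
    push_cast; ring
  have hY : ∑ n ∈ Finset.range (M+2), (n:ℝ)*(s (n+1)*(1-P (n+2)))
      = SB + s 0 * (1 - P 1) := by
    rw [hSB, Finset.sum_range_succ' (fun i => ((i:ℝ)-1)*(s i*(1-P (i+1)))) (M+2)]
    have : ∀ n ∈ Finset.range (M+2), (n:ℝ)*(s (n+1)*(1-P (n+2)))
        = ((↑(n+1):ℝ)-1)*(s (n+1)*(1-P (n+1+1))) := by
      intro n _; push_cast; ring
    rw [Finset.sum_congr rfl this]
    norm_num
  have hZ : ∑ n ∈ Finset.range (M+2), (n:ℝ)*(s n*(1-s n))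
      = SC - ((M:ℝ)+2)*(s (M+2)*(1-s (M+2))) := by
    conv_rhs => rw [hSC, Finset.sum_range_succ]
    push_cast; ring
  rw [hA, hW, hY, hZ, hP1, hPm1, hPm2]
  push_cast
  linear_combination hU

theorem stmt13 (k : ℕ) (hk : 0 < k) (q : ℝ → ℤ → ℝ)
    (hpos : ∀ t n, 0 ≤ q t n)
    (hsum : ∀ t, ∑ n ∈ Finset.Icc (0:ℤ) (2*k), q t n = 1)
    (hode0 : ∀ t, HasDerivAt (fun s => q s 0) ((1 - q t 0 - q t 1) * q t 1) t)
    (hoden : ∀ t, ∀ n : ℤ, 0 < n → n < 2*k →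
      HasDerivAt (fun s => q s n)
        (q t (n-1) * (∑ j ∈ Finset.Icc (0:ℤ) (n-2), q t j)
          + q t (n+1) * (∑ j ∈ Finset.Icc (n+2) (2*k : ℤ), q t j)
          - q t n * (1 - q t n)) t)
    (hode2k : ∀ t, HasDerivAt (fun s => q s (2*k))
      ((1 - q t (2*k-1) - q t (2*k)) * q t (2*k-1)) t) :
    ∀ t : ℝ,
      HasDerivAt (fun s => ∑ n ∈ Finset.Icc (0:ℤ) (2*k), (n : ℝ) * q s n)
        ((q t 0 - q t (2*k)) * (1 - q t 0 - q t (2*k))) t := by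
  intro t
  obtain ⟨M, hMk⟩ : ∃ M, 2*k = M + 2 := ⟨2*k-2, by omega⟩
  have hNM : (2*(k:ℤ)) = ((M+2:ℕ):ℤ) := by push_cast; omega
  set D : ℤ → ℝ := fun n =>
    if n = 0 then (1 - q t 0 - q t 1) * q t 1
    else if n = 2*(k:ℤ) then (1 - q t (2*(k:ℤ)-1) - q t (2*(k:ℤ))) * q t (2*(k:ℤ)-1)
    else q t (n-1) * (∑ j ∈ Finset.Icc (0:ℤ) (n-2), q t j)
      + q t (n+1) * (∑ j ∈ Finset.Icc (n+2) (2*(k:ℤ)), q t j)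
      - q t n * (1 - q t n) with hDdef
  have hD : HasDerivAt (fun s => ∑ n ∈ Finset.Icc (0:ℤ) (2*k), (n : ℝ) * q s n)
      (∑ n ∈ Finset.Icc (0:ℤ) (2*k), (n : ℝ) * D n) t := by
    apply HasDerivAt.fun_sum
    intro n hn
    simp only [Finset.mem_Icc] at hn
    by_cases h0 : n = 0
    · subst h0
      have := (hode0 t).const_mul ((0:ℤ):ℝ)
      convert this using 1
      · rfl
      all_goals simp [hDdef]
    · by_cases h2 : n = 2*(k:ℤ)
      · subst h2
        have := (hode2k t).const_mul (((2*(k:ℤ) : ℤ)) : ℝ)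
        convert this using 1
        · rfl
        rw [hDdef]
        simp only []
        split_ifs
        rfl
      · have hlt : n < 2*(k:ℤ) := by omega
        have hgt : (0:ℤ) < n := by omega
        have := (hoden t n hgt hlt).const_mul ((n:ℤ):ℝ)
        convert this using 1
        · rfl
        simp [hDdef, h0, h2]
  convert hD using 1
  symm
  -- now the algebraic identity
  set s : ℕ → ℝ := fun i => q t (i:ℤ) with hsdef
  have hs1 : ∑ i ∈ Finset.range (M+3), s i = 1 := by
    have := hsum t
    rw [hNM] at this
    rw [← this, sum_Icc_int_eq (fun n => q t n) (M+2)]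
  have step1 : ∑ n ∈ Finset.Icc (0:ℤ) (2*(k:ℤ)), (n : ℝ) * D n
      = ∑ i ∈ Finset.range (M+3), ((i:ℤ):ℝ) * D (i:ℤ) := by
    rw [hNM]
    exact sum_Icc_int_eq (fun n => (n:ℝ) * D n) (M+2)
  have step2 : ∀ i ∈ Finset.range (M+3), ((i:ℤ):ℝ) * D (i:ℤ)
      = (i:ℝ) * (if i = 0 then (1 - s 0 - s 1) * s 1
         else if i = M+2 then (1 - s (M+1) - s (M+2)) * s (M+1)
         else s (i-1) * (∑ j ∈ Finset.range (i-1), s j)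
           + s (i+1) * (1 - ∑ j ∈ Finset.range (i+2), s j)
           - s i * (1 - s i)) := by
    intro i hi
    simp only [Finset.mem_range] at hi
    by_cases h0 : i = 0
    · subst h0; norm_num [hDdef, hsdef]
    · by_cases h2 : i = M+2
      · subst h2
        rw [if_neg h0, if_pos rfl]
        have e1 : ((M+2:ℕ):ℤ) ≠ 0 := by omega
        have e2 : ((M+2:ℕ):ℤ) = 2*(k:ℤ) := hNM.symm
        rw [hDdef]
        simp only []
        split_ifs with hA hB
        · exact absurd hA e1
        · have c1 : (2*(k:ℤ)) - 1 = ((M+1:ℕ):ℤ) := by omega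
          rw [c1, hNM, hsdef]
          push_cast
          ring
      · -- interior
        have hi1 : 1 ≤ i := by omega
        rw [if_neg h0, if_neg h2, hDdef]
        have e1 : (i:ℤ) ≠ 0 := by omega
        have e2 : (i:ℤ) ≠ 2*(k:ℤ) := by omega
        simp only [if_neg e1, if_neg e2]
        have c1 : (i:ℤ) - 2 = ((i-1:ℕ):ℤ) - 1 := by omega
        have c2 : ∑ j ∈ Finset.Icc (0:ℤ) ((i:ℤ)-2), q t j
            = ∑ j ∈ Finset.range (i-1), s j := by
          rw [c1, sum_Icc_int_eq' (q t) (i-1)]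
        have c3 : ∑ j ∈ Finset.Icc ((i:ℤ)+2) (2*(k:ℤ)), q t j
            = 1 - ∑ j ∈ Finset.range (i+2), s j := by
          have hsp := split_Icc_int (q t) ((i:ℤ)+2) (2*(k:ℤ)) (by omega) (by omega)
          have hhead : ∑ n ∈ Finset.Icc (0:ℤ) ((i:ℤ)+2-1), q t n
              = ∑ j ∈ Finset.range (i+2), s j := by
            have : (i:ℤ)+2-1 = ((i+2:ℕ):ℤ)-1 := by push_cast; ring
            rw [this, sum_Icc_int_eq' (q t) (i+2)]
          have htot := hsum t
          rw [hhead] at hsp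
          linarith [hsp, htot]
        rw [c2, c3]
        have c4 : (i:ℤ) - 1 = ((i-1:ℕ):ℤ) := by omega
        have c5 : (i:ℤ) + 1 = ((i+1:ℕ):ℤ) := by push_cast; ring
        rw [c4, c5]
        simp only [hsdef]
        push_cast
        ring
  rw [step1, Finset.sum_congr rfl step2, key_s13 M s hs1, hNM]
  simp only [hsdef]
  norm_num
end

section
/- For k = 1, the functions q_1(t) = C/(C + e^t) with C = q_1(0)/(1 - q_1(0)), together with q_2(t) = ((C + e^t)/e^t)·[(C/2)·((C+2)e^{2t} - 2e^t - C)/((1+C)²(e^t + C)²) + q_2(0)/(1+C)] and q_0 = 1 - q_1 - q_2, solve the system q_0' = (1 - q_0 - q_1)q_1, q_1' = -q_1(1 - q_1) [i.e., q_1' = q_0·0 + q_2·0 - q_1(1-q_1) with empty sums], q_2' = (1 - q_1 - q_2)q_1, and converge as t → ∞ to q̄_0 = (1 + q_0(0)² - q_2(0)²)/2, q̄_1 = 0, q̄_2 = (1 - q_0(0)² + q_2(0)²)/2. -/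
theorem stmt14 (a b c : ℝ) (ha : 0 ≤ a) (hb : 0 ≤ b) (hc : 0 ≤ c)
    (hsum : a + b + c = 1) (hb1 : b < 1)
    (C : ℝ) (hC : C = b / (1 - b))
    (q1 q2 q0 : ℝ → ℝ)
    (hq1 : ∀ t, q1 t = C / (C + Real.exp t))
    (hq2 : ∀ t, q2 t = ((C + Real.exp t) / Real.exp t) *
      ((C/2) * ((C+2) * Real.exp (2*t) - 2 * Real.exp t - C) /
        ((1+C)^2 * (Real.exp t + C)^2) + c / (1+C)))
    (hq0 : ∀ t, q0 t = 1 - q1 t - q2 t) :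
    q0 0 = a ∧ q1 0 = b ∧ q2 0 = c
    ∧ (∀ t, HasDerivAt q0 ((1 - q0 t - q1 t) * q1 t) t)
    ∧ (∀ t, HasDerivAt q1 (-(q1 t * (1 - q1 t))) t)
    ∧ (∀ t, HasDerivAt q2 ((1 - q1 t - q2 t) * q1 t) t)
    ∧ Filter.Tendsto q0 Filter.atTop (nhds ((1 + a^2 - c^2)/2))
    ∧ Filter.Tendsto q1 Filter.atTop (nhds 0)
    ∧ Filter.Tendsto q2 Filter.atTop (nhds ((1 - a^2 + c^2)/2)) := by
  have hb' : (0:ℝ) < 1 - b := by linarith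
  have hC0 : 0 ≤ C := hC ▸ div_nonneg hb hb'.le
  have h1C : (0:ℝ) < 1 + C := by linarith
  have h1C' : (1 + C) ≠ 0 := ne_of_gt h1C
  have hCE : ∀ t : ℝ, 0 < C + Real.exp t :=
    fun t => add_pos_of_nonneg_of_pos hC0 (Real.exp_pos t)
  have hEC : ∀ t : ℝ, (0:ℝ) < Real.exp t + C :=
    fun t => add_pos_of_pos_of_nonneg (Real.exp_pos t) hC0
  have hbC : b = C / (1 + C) := by
    rw [hC]; field_simp; ring
  have hq10 : q1 0 = b := by
    rw [hq1, Real.exp_zero, hC]; field_simp; ring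
  have hq20 : q2 0 = c := by
    rw [hq2, Real.exp_zero]
    norm_num
    field_simp
    ring
  have hq00 : q0 0 = a := by
    rw [hq0, hq10, hq20]; linarith
  have hq1' : ∀ t, HasDerivAt q1 (-(q1 t * (1 - q1 t))) t := by
    intro t
    have h := (Real.hasDerivAt_exp t).const_add C
    have hd := (hasDerivAt_const t C).div h (ne_of_gt (hCE t))
    have heq : q1 = fun t => C / (C + Real.exp t) := funext hq1
    rw [heq]
    refine hd.congr_deriv ?_
    symm
    beta_reduce
    have h0 : C + Real.exp t ≠ 0 := ne_of_gt (hCE t)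
    field_simp
    ring
  have hE2 : ∀ t : ℝ, Real.exp (2*t) = Real.exp t ^ 2 := by
    intro t; rw [two_mul, Real.exp_add]; ring
  have hq2' : ∀ t, HasDerivAt q2 ((1 - q1 t - q2 t) * q1 t) t := by
    intro t
    have he : HasDerivAt (fun x : ℝ => Real.exp x) (Real.exp t) t := Real.hasDerivAt_exp t
    have he2 : HasDerivAt (fun x : ℝ => Real.exp (2*x)) (Real.exp (2*t) * 2) t := by
      simpa using ((hasDerivAt_id t).const_mul 2).exp
    have hu : HasDerivAt (fun x => (C/2) * ((C+2) * Real.exp (2*x) - 2 * Real.exp x - C))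
        ((C/2) * ((C+2) * (Real.exp (2*t) * 2) - 2 * Real.exp t)) t := by
      have := (((he2.const_mul (C+2)).sub (he.const_mul 2)).sub_const C).const_mul (C/2)
      exact this
    have hv : HasDerivAt (fun x => (1+C)^2 * (Real.exp x + C)^2)
        ((1+C)^2 * ((2:ℕ) * (Real.exp t + C)^1 * Real.exp t)) t := by
      exact ((he.add_const C).pow 2).const_mul ((1+C)^2)
    have hvne : (1+C)^2 * (Real.exp t + C)^2 ≠ 0 := by positivity
    have hinner := (hu.div hv hvne).add_const (c/(1+C))
    have hout : HasDerivAt (fun x => (C + Real.exp x) / Real.exp x)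
        ((Real.exp t * Real.exp t - (C + Real.exp t) * Real.exp t) / Real.exp t ^ 2) t :=
      (he.const_add C).div he (Real.exp_ne_zero t)
    have htot := hout.mul hinner
    have heq : q2 = fun t => ((C + Real.exp t) / Real.exp t) *
      ((C/2) * ((C+2) * Real.exp (2*t) - 2 * Real.exp t - C) /
        ((1+C)^2 * (Real.exp t + C)^2) + c / (1+C)) := funext hq2
    rw [heq]
    refine htot.congr_deriv ?_
    symm
    simp only [hq1, hE2, Pi.div_apply]
    push_cast
    have hEne := Real.exp_ne_zero t
    have hECne := ne_of_gt (hEC t)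
    have hCEne := ne_of_gt (hCE t)
    field_simp
    ring
  have hq0' : ∀ t, HasDerivAt q0 ((1 - q0 t - q1 t) * q1 t) t := by
    intro t
    have heq : q0 = fun t => 1 - q1 t - q2 t := funext hq0
    rw [heq]
    have := ((hasDerivAt_const t (1:ℝ)).sub (hq1' t)).sub (hq2' t)
    refine this.congr_deriv ?_
    symm
    beta_reduce
    ring
  -- limits
  have hlim1 : Filter.Tendsto q1 Filter.atTop (nhds 0) := by
    have heq : q1 = fun t => C / (C + Real.exp t) := funext hq1
    rw [heq]
    exact Filter.Tendsto.div_atTop tendsto_const_nhds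
      (Filter.tendsto_atTop_add_const_left _ C Real.tendsto_exp_atTop)
  set F : ℝ → ℝ := fun u => (1 + C*u) *
    ((C/2) * ((C+2) - 2*u - C*u^2) / ((1+C)^2 * (1+C*u)^2) + c / (1+C)) with hF
  have hFq : ∀ t, q2 t = F (Real.exp (-t)) := by
    intro t
    rw [hq2, hF, Real.exp_neg, hE2 t]
    have hEne := Real.exp_ne_zero t
    have hECne := ne_of_gt (hEC t)
    have h1CE : (1 + C * (Real.exp t)⁻¹) ≠ 0 := by
      have : (1 + C * (Real.exp t)⁻¹) = (Real.exp t + C) / Real.exp t := by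
        field_simp
      rw [this]
      exact div_ne_zero hECne hEne
    field_simp
    ring
  have hne0 : (1+C)^2 * (1+C*(0:ℝ))^2 ≠ 0 := by
    norm_num
    positivity
  have hnum : Continuous fun u:ℝ => (C/2) * ((C+2) - 2*u - C*u^2) := by fun_prop
  have hden : Continuous fun u:ℝ => (1+C)^2 * (1+C*u)^2 := by fun_prop
  have hcont : ContinuousAt F 0 :=
    (continuousAt_const.add (continuousAt_const.mul continuousAt_id)).mul
      ((hnum.continuousAt.div hden.continuousAt hne0).add continuousAt_const)
  have hlim2' : Filter.Tendsto q2 Filter.atTop (nhds (F 0)) := by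
    have heq : q2 = fun t => F (Real.exp (-t)) := funext hFq
    rw [heq]
    exact hcont.tendsto.comp Real.tendsto_exp_neg_atTop_nhds_zero
  have hF0 : F 0 = (1 - a^2 + c^2)/2 := by
    have ha' : a = 1 - b - c := by linarith
    rw [hF, ha', hbC]
    field_simp
    ring
  have hlim2 : Filter.Tendsto q2 Filter.atTop (nhds ((1 - a^2 + c^2)/2)) := hF0 ▸ hlim2'
  have hlim0 : Filter.Tendsto q0 Filter.atTop (nhds ((1 + a^2 - c^2)/2)) := by
    have heq : q0 = fun t => 1 - q1 t - q2 t := funext hq0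
    rw [heq]
    have h1 : Filter.Tendsto (fun _ : ℝ => (1:ℝ)) Filter.atTop (nhds 1) :=
      tendsto_const_nhds
    have := (h1.sub hlim1).sub hlim2
    convert this using 2
    ring
  exact ⟨hq00, hq10, hq20, hq0', hq1', hq2', hlim0, hlim1, hlim2⟩
end

section
/- Let q(t) be a classical solution in the probability simplex of the α = 1/2 system (as above). Then d/dt Σ_{n=0}^{2k} (q_n - 1/(2k+1))²·(2k+1) = -(2k+1) Σ_{n=0}^{2k-1} (1 - q_n - q_{n+1})(q_{n+1} - q_n)² ≤ 0. -/
lemma abel_sum (m : ℕ) (y F : ℕ → ℝ) (hF : F m = 0) :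
    ∑ n ∈ Finset.range (m+1), y n * (F n - (if n = 0 then 0 else F (n-1)))
    = ∑ n ∈ Finset.range m, F n * (y n - y (n+1)) := by
  have h1 : ∑ n ∈ Finset.range (m+1), y n * F n
      = ∑ n ∈ Finset.range m, y n * F n := by
    rw [Finset.sum_range_succ, hF, mul_zero, add_zero]
  have h2 : ∑ n ∈ Finset.range (m+1), y n * (if n = 0 then 0 else F (n-1))
      = ∑ n ∈ Finset.range m, y (n+1) * F n := by
    rw [Finset.sum_range_succ']
    simp
  calc ∑ n ∈ Finset.range (m+1), y n * (F n - (if n = 0 then 0 else F (n-1)))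
      = ∑ n ∈ Finset.range (m+1), (y n * F n - y n * (if n = 0 then 0 else F (n-1))) := by
        apply Finset.sum_congr rfl; intro n _; ring
    _ = (∑ n ∈ Finset.range (m+1), y n * F n)
        - ∑ n ∈ Finset.range (m+1), y n * (if n = 0 then 0 else F (n-1)) := by
        rw [Finset.sum_sub_distrib]
    _ = (∑ n ∈ Finset.range m, y n * F n) - ∑ n ∈ Finset.range m, y (n+1) * F n := by
        rw [h1, h2]
    _ = ∑ n ∈ Finset.range m, F n * (y n - y (n+1)) := by
        rw [← Finset.sum_sub_distrib]; apply Finset.sum_congr rfl; intro n _; ring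

theorem stmt16 (k : ℕ) (hk : 0 < k) (q : ℝ → ℕ → ℝ)
    (hpos : ∀ t n, 0 ≤ q t n)
    (hsum : ∀ t, ∑ n ∈ Finset.range (2*k+1), q t n = 1)
    (hode0 : ∀ t, HasDerivAt (fun s => q s 0)
      ((1/2) * (1 - q t 1) * q t 1 - (1/2) * (1 - q t 0) * q t 0) t)
    (hoden : ∀ t, ∀ n : ℕ, 0 < n → n < 2*k →
      HasDerivAt (fun s => q s n)
        ((1/2) * q t (n-1) * (1 - q t (n-1)) + (1/2) * q t (n+1) * (1 - q t (n+1))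
          - q t n * (1 - q t n)) t)
    (hode2k : ∀ t, HasDerivAt (fun s => q s (2*k))
      ((1/2) * (1 - q t (2*k-1)) * q t (2*k-1) - (1/2) * (1 - q t (2*k)) * q t (2*k)) t) :
    ∀ t : ℝ,
      HasDerivAt (fun s => ∑ n ∈ Finset.range (2*k+1),
          (q s n - 1/(2*(k:ℝ)+1))^2 * (2*(k:ℝ)+1))
        (-(2*(k:ℝ)+1) * ∑ n ∈ Finset.range (2*k),
          (1 - q t n - q t (n+1)) * (q t (n+1) - q t n)^2) t
      ∧ -(2*(k:ℝ)+1) * ∑ n ∈ Finset.range (2*k),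
          (1 - q t n - q t (n+1)) * (q t (n+1) - q t n)^2 ≤ 0 := by
  intro t
  set C : ℝ := 2*(k:ℝ)+1 with hC
  have hCpos : (0:ℝ) ≤ C := by positivity
  set c : ℝ := 1/C with hc
  -- nonnegativity of the dissipation sum
  have hsumnn : 0 ≤ ∑ n ∈ Finset.range (2*k),
      (1 - q t n - q t (n+1)) * (q t (n+1) - q t n)^2 := by
    apply Finset.sum_nonneg
    intro n hn
    rw [Finset.mem_range] at hn
    have hle : q t n + q t (n+1) ≤ 1 := by
      rw [← hsum t]
      have hsub : ({n, n+1} : Finset ℕ) ⊆ Finset.range (2*k+1) := by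
        intro x hx
        simp only [Finset.mem_insert, Finset.mem_singleton] at hx
        rcases hx with h | h <;> simp [h] <;> omega
      have := Finset.sum_le_sum_of_subset_of_nonneg hsub (fun i _ _ => hpos t i)
      rwa [Finset.sum_pair (by omega : n ≠ n+1)] at this
    exact mul_nonneg (by linarith) (sq_nonneg _)
  refine ⟨?_, ?_⟩
  · -- flux function
    set g : ℕ → ℝ := fun n => q t n * (1 - q t n) with hg
    set F : ℕ → ℝ := fun n => if n < 2*k then (g (n+1) - g n)/2 else 0 with hF
    set d : ℕ → ℝ := fun n => F n - (if n = 0 then 0 else F (n-1)) with hd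
    have hq : ∀ n ∈ Finset.range (2*k+1), HasDerivAt (fun s => q s n) (d n) t := by
      intro n hn
      rw [Finset.mem_range] at hn
      rcases Nat.lt_or_ge n (2*k) with h2 | h2
      · rcases Nat.eq_zero_or_pos n with h0 | h0
        · subst h0
          convert hode0 t using 1
          simp only [hd, hF, hg, if_pos h2]
          norm_num
          ring
        · have := hoden t n h0 h2
          convert this using 1
          have hne : n ≠ 0 := by omega
          have hn1 : n - 1 < 2*k := by omega
          simp only [hd, hF, hg, if_pos h2, if_neg hne, if_pos hn1]
          have : n - 1 + 1 = n := by omega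
          rw [this]
          ring
      · have hn2k : n = 2*k := by omega
        subst hn2k
        have := hode2k t
        convert this using 1
        have hne : 2*k ≠ 0 := by omega
        have hlt : ¬ (2*k < 2*k) := by omega
        have hlt2 : 2*k - 1 < 2*k := by omega
        simp only [hd, hF, hg, if_neg hlt, if_neg hne, if_pos hlt2]
        have : 2*k - 1 + 1 = 2*k := by omega
        rw [this]
        ring
    have hderiv : HasDerivAt (fun s => ∑ n ∈ Finset.range (2*k+1), (q s n - c)^2 * C)
        (∑ n ∈ Finset.range (2*k+1), (2 * (q t n - c) * d n) * C) t := by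
      apply HasDerivAt.fun_sum
      intro n hn
      have h1 : HasDerivAt (fun s => (q s n - c)^2) (2 * (q t n - c) * d n) t := by
        have : HasDerivAt (fun s => (q s n - c)^2) ((2:ℕ) * (q t n - c)^(2-1) * d n) t :=
          ((hq n hn).sub_const c).pow 2
        convert this using 1
        simp
      exact h1.mul_const C
    convert hderiv using 1
    have hkey : ∑ n ∈ Finset.range (2*k+1), (2 * (q t n - c)) * d n
        = ∑ n ∈ Finset.range (2*k), F n * ((2 * (q t n - c)) - (2 * (q t (n+1) - c))) := by
      exact abel_sum (2*k) (fun n => 2 * (q t n - c)) F (by simp [hF])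
    have : ∑ n ∈ Finset.range (2*k+1), (2 * (q t n - c) * d n) * C
        = C * ∑ n ∈ Finset.range (2*k+1), (2 * (q t n - c)) * d n := by
      rw [Finset.mul_sum]; apply Finset.sum_congr rfl; intro n _; ring
    rw [this, hkey]
    rw [neg_mul, ← mul_neg, ← Finset.sum_neg_distrib]
    congr 1
    apply Finset.sum_congr rfl
    intro n hn
    rw [Finset.mem_range] at hn
    simp only [hF, hg, if_pos hn]
    ring
  · have : 0 ≤ C * ∑ n ∈ Finset.range (2*k),
        (1 - q t n - q t (n+1)) * (q t (n+1) - q t n)^2 := mul_nonneg hCpos hsumnn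
    linarith
end
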